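/- arXiv:1712.08194 — 5 statements merged into one kernel-verified Lean document; each statement's English description precedes it below -/
import Mathlib

section
/- Let Λ be a k-graph and G a group. Set Λ^e := ⋃_{i=1}^{k} Λ^{e_i}. Suppose G acts on the set Λ^0 ∪ Λ^e and there is a restriction map G × (Λ^0 ∪ Λ^e) → G, (g, x) ↦ g|_x, satisfying: (i) G·Λ^n ⊆ Λ^n for all n ∈ {0, e_1, …, e_k}; (ii) s(g·μ) = g·s(μ) and r(g·μ) = g·r(μ) for all g ∈ G, μ ∈ Λ^e; (iii) g|_μ·s(ν) = g·s(ν) for all g ∈ G, μ ∈ Λ^e, ν ∈ Λ with s(μ) = r(ν); (iv) (g·μ)(g|_μ·ν) = (g·α)(g|_α·β) for all g ∈ G and μ, ν, α, β ∈ Λ^e with μν = αβ; (v) g|_v = g for all g ∈ G, v ∈ Λ^0; (vi) (g|_μ)|_ν = (g|_α)|_β for all g ∈ G and μ, ν, α, β ∈ Λ^e with μν = αβ; (vii) (gh)|_μ = (g|_{h·μ})(h|_μ) for all g, h ∈ G, μ ∈ Λ^e. Then there exists a unique self-similar action of G on Λ with restriction map G × Λ → G extending the given action and the given restriction map. -/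
namespace SSKG

/-- `ℕ^k`. -/
abbrev NK (k : ℕ) := Fin k → ℕ
/-- `ℤ^k`. -/
abbrev ZK (k : ℕ) := Fin k → ℤ

lemma le0 {k : ℕ} (p : NK k) : 0 ≤ p := Pi.le_def.mpr fun i => Nat.zero_le (p i)

/-- A (row-finite, source-free, countable) `k`-graph: a countable small category with a
degree functor `d` into `ℕ^k` satisfying the unique factorization property. -/
structure KGraph (k : ℕ) where
  Obj : Type
  Mor : Type
  countable_mor : Countable Mor
  r : Mor → Obj
  s : Mor → Obj
  d : Mor → NK k
  ofObj : Obj → Mor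
  comp : (μ ν : Mor) → s μ = r ν → Mor
  r_ofObj : ∀ v, r (ofObj v) = v
  s_ofObj : ∀ v, s (ofObj v) = v
  d_ofObj : ∀ v, d (ofObj v) = 0
  eq_ofObj_of_d_eq_zero : ∀ μ, d μ = 0 → ∃ v, μ = ofObj v
  r_comp : ∀ μ ν h, r (comp μ ν h) = r μ
  s_comp : ∀ μ ν h, s (comp μ ν h) = s ν
  d_comp : ∀ μ ν h, d (comp μ ν h) = d μ + d ν
  comp_ofObj : ∀ μ (h : s μ = r (ofObj (s μ))), comp μ (ofObj (s μ)) h = μ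
  ofObj_comp : ∀ μ (h : s (ofObj (r μ)) = r μ), comp (ofObj (r μ)) μ h = μ
  comp_assoc : ∀ μ ν ρ (h₁ : s μ = r ν) (h₂ : s ν = r ρ),
      comp (comp μ ν h₁) ρ ((s_comp μ ν h₁).trans h₂)
        = comp μ (comp ν ρ h₂) (h₁.trans (r_comp ν ρ h₂).symm)
  factor_exists : ∀ μ (n m : NK k), d μ = n + m →
      ∃ (α β : Mor) (h : s α = r β), d α = n ∧ d β = m ∧ comp α β h = μ
  factor_unique : ∀ (α β α' β' : Mor) (h : s α = r β) (h' : s α' = r β'),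
      d α = d α' → comp α β h = comp α' β' h' → α = α' ∧ β = β'
  row_finite : ∀ (v : Obj) (n : NK k), {μ : Mor | r μ = v ∧ d μ = n}.Finite
  no_sources : ∀ (v : Obj) (n : NK k), ∃ μ : Mor, r μ = v ∧ d μ = n

lemma KGraph.comp_congr {k : ℕ} (Λ : KGraph k) {μ ν ν' : Λ.Mor} (hν : ν = ν')
    (h : Λ.s μ = Λ.r ν) (h' : Λ.s μ = Λ.r ν') : Λ.comp μ ν h = Λ.comp μ ν' h' := by
  cases hν; rfl

/-- An edge: a morphism of degree `e_i` for some `i`. -/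
def IsEdge {k : ℕ} (Λ : KGraph k) (μ : Λ.Mor) : Prop := ∃ i : Fin k, Λ.d μ = Pi.single i 1

/-- Membership in `Λ⁰ ∪ Λᵉ` (a vertex or an edge). -/
def VorE {k : ℕ} (Λ : KGraph k) (μ : Λ.Mor) : Prop := Λ.d μ = 0 ∨ IsEdge Λ μ

/-- A self-similar action of a group `G` on a `k`-graph `Λ`: an action by degree-,
range- and source-preserving automorphisms, together with a restriction map
`(g, μ) ↦ g|_μ` satisfying the Exel–Pardo style axioms. -/
structure SelfSimilar (k : ℕ) (G : Type) [Group G] (Λ : KGraph k) where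
  act : G → Λ.Mor → Λ.Mor
  res : G → Λ.Mor → G
  act_one : ∀ μ, act 1 μ = μ
  act_mul : ∀ g h μ, act (g * h) μ = act g (act h μ)
  act_d : ∀ g μ, Λ.d (act g μ) = Λ.d μ
  act_ofObj_r : ∀ g μ, act g (Λ.ofObj (Λ.r μ)) = Λ.ofObj (Λ.r (act g μ))
  act_ofObj_s : ∀ g μ, act g (Λ.ofObj (Λ.s μ)) = Λ.ofObj (Λ.s (act g μ))
  compat : ∀ g μ ν (h : Λ.s μ = Λ.r ν), Λ.s (act g μ) = Λ.r (act (res g μ) ν)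
  act_comp : ∀ g μ ν (h : Λ.s μ = Λ.r ν),
      act g (Λ.comp μ ν h) = Λ.comp (act g μ) (act (res g μ) ν) (compat g μ ν h)
  res_ofObj : ∀ g v, res g (Λ.ofObj v) = g
  res_comp : ∀ g μ ν (h : Λ.s μ = Λ.r ν), res g (Λ.comp μ ν h) = res (res g μ) ν
  res_one : ∀ μ, res 1 μ = 1
  res_mul : ∀ g h μ, res (g * h) μ = res g (act h μ) * res h μ

variable {k : ℕ} {G : Type} [Group G] {Λ : KGraph k}

/-- The induced action of `G` on the vertices `Λ⁰`. -/
def SelfSimilar.actV (S : SelfSimilar k G Λ) (g : G) (v : Λ.Obj) : Λ.Obj :=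
  Λ.s (S.act g (Λ.ofObj v))

/-- The action is pseudo free. -/
def SelfSimilar.PseudoFree (S : SelfSimilar k G Λ) : Prop :=
  ∀ (g : G) (μ : Λ.Mor), S.act g μ = μ → S.res g μ = 1 → g = 1

/-- An infinite path in `Λ`: a degree-preserving functor `Ω_k → Λ`, recorded through
its segments `x(p,q)` for `p ≤ q`. -/
structure InfPath {k : ℕ} (Λ : KGraph k) where
  seg : ∀ p q : NK k, p ≤ q → Λ.Mor
  d_seg : ∀ p q (h : p ≤ q), Λ.d (seg p q h) = fun i => q i - p i
  src_seg : ∀ p q m (h₁ : p ≤ q) (h₂ : q ≤ m), Λ.s (seg p q h₁) = Λ.r (seg q m h₂)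
  comp_seg : ∀ p q m (h₁ : p ≤ q) (h₂ : q ≤ m),
      Λ.comp (seg p q h₁) (seg q m h₂) (src_seg p q m h₁ h₂) = seg p m (h₁.trans h₂)

lemma InfPath.ext' {x y : InfPath Λ} (h : x.seg = y.seg) : x = y := by
  cases x; cases y; cases h; rfl

/-- The shift `σ^p(x)`. -/
def InfPath.shift (x : InfPath Λ) (p : NK k) : InfPath Λ where
  seg m n h := x.seg (m + p) (n + p) (add_le_add_left h p)
  d_seg m n h := by
    rw [x.d_seg]; funext i; simp only [Pi.add_apply]; omega
  src_seg m n l h₁ h₂ := x.src_seg _ _ _ _ _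
  comp_seg m n l h₁ h₂ := x.comp_seg _ _ _ _ _

/-- The action of `G` on infinite paths: `(g·x)(p,q) = g|_{x(0,p)} · x(p,q)`. -/
def SelfSimilar.actInf (S : SelfSimilar k G Λ) (g : G) (x : InfPath Λ) : InfPath Λ where
  seg p q h := S.act (S.res g (x.seg 0 p (le0 p))) (x.seg p q h)
  d_seg p q h := by rw [S.act_d, x.d_seg]
  src_seg p q m h₁ h₂ := by
    have key : S.res g (x.seg 0 q (le0 q))
        = S.res (S.res g (x.seg 0 p (le0 p))) (x.seg p q h₁) := by
      rw [← S.res_comp g (x.seg 0 p (le0 p)) (x.seg p q h₁) (x.src_seg 0 p q (le0 p) h₁),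
        x.comp_seg 0 p q (le0 p) h₁]
    beta_reduce
    rw [key]
    exact S.compat _ _ _ (x.src_seg p q m h₁ h₂)
  comp_seg p q m h₁ h₂ := by
    have key : S.res g (x.seg 0 q (le0 q))
        = S.res (S.res g (x.seg 0 p (le0 p))) (x.seg p q h₁) := by
      rw [← S.res_comp g (x.seg 0 p (le0 p)) (x.seg p q h₁) (x.src_seg 0 p q (le0 p) h₁),
        x.comp_seg 0 p q (le0 p) h₁]
    beta_reduce
    rw [← x.comp_seg p q m h₁ h₂, S.act_comp]
    exact Λ.comp_congr (by rw [key]) _ _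

/-- The restriction cocycle `g|_x : ℕ^k → G`, `g|_x(p) = g|_{x(0,p)}`. -/
def SelfSimilar.resInf (S : SelfSimilar k G Λ) (g : G) (x : InfPath Λ) : NK k → G :=
  fun p => S.res g (x.seg 0 p (le0 p))

/-- `IsConcat μ x y` says that `y = μx`, the concatenation of the finite path `μ`
(with `x(0,0) = s(μ)`) and the infinite path `x`. -/
def IsConcat (Λ : KGraph k) (μ : Λ.Mor) (x y : InfPath Λ) : Prop :=
  x.seg 0 0 le_rfl = Λ.ofObj (Λ.s μ) ∧
  y.seg 0 (Λ.d μ) (le0 _) = μ ∧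
  ∀ m n (h : m ≤ n), y.seg (Λ.d μ + m) (Λ.d μ + n) (add_le_add_right h _) = x.seg m n h

/-- The cylinder set `Z(μ)`. -/
def cylinder (Λ : KGraph k) (μ : Λ.Mor) : Set (InfPath Λ) :=
  {x : InfPath Λ | x.seg 0 (Λ.d μ) (le0 _) = μ}

/-- The cylinder-set topology on `Λ^∞`. -/
instance instTopInfPath (Λ : KGraph k) : TopologicalSpace (InfPath Λ) :=
  TopologicalSpace.generateFrom {U | ∃ μ : Λ.Mor, U = cylinder Λ μ}

/-- `Λ` is `G`-cofinal. -/
def GCofinal (S : SelfSimilar k G Λ) : Prop :=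
  ∀ (x : InfPath Λ) (v : Λ.Obj), ∃ (p : NK k) (μ : Λ.Mor) (g : G),
    Λ.ofObj (Λ.s μ) = x.seg p p le_rfl ∧ Λ.r μ = S.actV g v

/-- `Λ` is `G`-aperiodic. -/
def GAperiodic (S : SelfSimilar k G Λ) : Prop :=
  ∀ v : Λ.Obj, ∃ x : InfPath Λ, x.seg 0 0 le_rfl = Λ.ofObj v ∧
    ∀ (g : G) (p q : NK k), g ≠ 1 ∨ p ≠ q → x.shift p ≠ S.actInf g (x.shift q)

/-- A subset `U ⊆ Λ^∞` is invariant for the self-similar action. -/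
def InvariantSet (S : SelfSimilar k G Λ) (U : Set (InfPath Λ)) : Prop :=
  ∀ (g : G) (μ ν : Λ.Mor) (x z y : InfPath Λ),
    Λ.s μ = S.actV g (Λ.s ν) → IsConcat Λ ν x z → IsConcat Λ μ (S.actInf g x) y →
    z ∈ U → y ∈ U

/-- The minimal common extensions `Λ^min(μ,ν)`. -/
def Lmin (Λ : KGraph k) (μ ν : Λ.Mor) : Set (Λ.Mor × Λ.Mor) :=
  {p | ∃ (h₁ : Λ.s μ = Λ.r p.1) (h₂ : Λ.s ν = Λ.r p.2),
      Λ.comp μ p.1 h₁ = Λ.comp ν p.2 h₂ ∧ Λ.d (Λ.comp μ p.1 h₁) = Λ.d μ ⊔ Λ.d ν}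

/-- The group `C(ℕ^k, G)` of all functions `ℕ^k → G` under pointwise multiplication. -/
abbrev CkG (k : ℕ) (G : Type) [Group G] := NK k → G

/-- The normal subgroup of eventually trivial functions. -/
def tailTrivial (k : ℕ) (G : Type) [Group G] : Subgroup (CkG k G) where
  carrier := {f | ∃ z : NK k, ∀ p, z ≤ p → f p = 1}
  one_mem' := ⟨0, fun _ _ => rfl⟩
  mul_mem' := by
    rintro f g ⟨z₁, h₁⟩ ⟨z₂, h₂⟩
    exact ⟨z₁ ⊔ z₂, fun p hp => by
      rw [Pi.mul_apply, h₁ p (le_trans le_sup_left hp), h₂ p (le_trans le_sup_right hp),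
        one_mul]⟩
  inv_mem' := by
    rintro f ⟨z, h⟩
    exact ⟨z, fun p hp => by rw [Pi.inv_apply, h p hp, inv_one]⟩

instance tailTrivialNormal (k : ℕ) (G : Type) [Group G] : (tailTrivial k G).Normal := by
  constructor
  rintro f ⟨z, hz⟩ g
  exact ⟨z, fun p hp => by
    simp only [Pi.mul_apply, Pi.inv_apply, hz p hp, mul_one, mul_inv_cancel]⟩

/-- The quotient group `Q(ℕ^k, G) = C(ℕ^k,G)/∼`. -/
abbrev QkG (k : ℕ) (G : Type) [Group G] := CkG k G ⧸ tailTrivial k G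

/-- Coercion `ℕ^k → ℤ^k`. -/
def toZ {k : ℕ} (p : NK k) : ZK k := fun i => (p i : ℤ)

open scoped Classical in
/-- The translation `T_z` on functions `ℕ^k → G`, for `z ∈ ℤ^k`. -/
noncomputable def transFun {k : ℕ} {G : Type} [Group G] (z : ZK k) (f : CkG k G) : CkG k G :=
  fun p => if (∀ i, z i ≤ (p i : ℤ)) then f (fun i => ((p i : ℤ) - z i).toNat) else 1

/-- The ambient space `Λ^∞ × (Q(ℕ^k,G) ⋊ ℤ^k) × Λ^∞` containing the self-similar
path groupoid (as a set). -/
abbrev Triple (k : ℕ) (G : Type) [Group G] (Λ : KGraph k) :=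
  InfPath Λ × (QkG k G × ZK k) × InfPath Λ

/-- The basic set `Z(μ, g, ν)` of the self-similar path groupoid. -/
def Zset (S : SelfSimilar k G Λ) (μ : Λ.Mor) (g : G) (ν : Λ.Mor) : Set (Triple k G Λ) :=
  {t | ∃ x y z : InfPath Λ, IsConcat Λ ν x z ∧ IsConcat Λ μ (S.actInf g x) y ∧
    t = (y, ((QuotientGroup.mk (transFun (toZ (Λ.d μ)) (S.resInf g x)) : QkG k G),
      toZ (Λ.d μ) - toZ (Λ.d ν)), z)}

/-- The family `B_{G,Λ}` of basic sets. -/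
def BGL (S : SelfSimilar k G Λ) : Set (Set (Triple k G Λ)) :=
  {A | ∃ (μ ν : Λ.Mor) (g : G), Λ.s μ = S.actV g (Λ.s ν) ∧ A = Zset S μ g ν}

/-- The self-similar path groupoid `G_{G,Λ}` (as a set of triples). -/
def Gpd (S : SelfSimilar k G Λ) : Set (Triple k G Λ) :=
  {t | ∃ (g : G) (μ ν : Λ.Mor), Λ.s μ = S.actV g (Λ.s ν) ∧ t ∈ Zset S μ g ν}

/-- The topology on `G_{G,Λ}` generated by the basic sets. -/
def gpdTop (S : SelfSimilar k G Λ) : TopologicalSpace {t : Triple k G Λ // t ∈ Gpd S} :=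
  TopologicalSpace.generateFrom
    {A | ∃ (μ ν : Λ.Mor) (g : G), A = {t | (t : Triple k G Λ) ∈ Zset S μ g ν}}


section Stmt2Aux

variable {k : ℕ} {G : Type} [Group G] {Λ : KGraph k}

/-- Total degree. -/
def sz {k : ℕ} (n : NK k) : ℕ := ∑ i, n i

lemma sz_add {k : ℕ} (n m : NK k) : sz (n + m) = sz n + sz m := by
  simp [sz, Finset.sum_add_distrib]

lemma sz_single {k : ℕ} (i : Fin k) : sz (Pi.single i 1 : NK k) = 1 := by
  simp [sz, Pi.single_apply]

lemma ofObj_inj (Λ : KGraph k) : Function.Injective Λ.ofObj := fun x y h => by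
  rw [← Λ.r_ofObj x, ← Λ.r_ofObj y, h]

lemma comp_congr₂ (Λ : KGraph k) {μ μ' ν ν' : Λ.Mor} (hμ : μ = μ') (hν : ν = ν')
    (h : Λ.s μ = Λ.r ν) (h' : Λ.s μ' = Λ.r ν') : Λ.comp μ ν h = Λ.comp μ' ν' h' := by
  subst hμ; subst hν; rfl

open Classical in
/-- Proof-free composition. -/
noncomputable def KGraph.compo (Λ : KGraph k) (μ ν : Λ.Mor) : Λ.Mor :=
  if h : Λ.s μ = Λ.r ν then Λ.comp μ ν h else μ

lemma compo_eq (Λ : KGraph k) {μ ν : Λ.Mor} (h : Λ.s μ = Λ.r ν) :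
    Λ.compo μ ν = Λ.comp μ ν h := by unfold KGraph.compo; exact dif_pos h

lemma compo_assoc (Λ : KGraph k) {μ ν ρ' : Λ.Mor} (h₁ : Λ.s μ = Λ.r ν) (h₂ : Λ.s ν = Λ.r ρ') :
    Λ.compo μ (Λ.compo ν ρ') = Λ.compo (Λ.compo μ ν) ρ' := by
  rw [compo_eq Λ h₂, compo_eq Λ h₁,
    compo_eq Λ (h₁.trans (Λ.r_comp ν ρ' h₂).symm),
    compo_eq Λ ((Λ.s_comp μ ν h₁).trans h₂)]
  exact (Λ.comp_assoc μ ν ρ' h₁ h₂).symm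

/-- A chosen edge-splitting of a morphism of nonzero degree. -/
noncomputable def peelSpec (Λ : KGraph k) (μ : Λ.Mor) (hμ : Λ.d μ ≠ 0) :
    {q : Λ.Mor × Λ.Mor // ∃ (i : Fin k) (h : Λ.s q.1 = Λ.r q.2),
      Λ.d q.1 = Pi.single i 1 ∧ Λ.comp q.1 q.2 h = μ} :=
  Classical.indefiniteDescription _ (by
    obtain ⟨i, hi⟩ := Function.ne_iff.mp hμ
    have hi' : Λ.d μ i ≠ 0 := by simpa using hi
    obtain ⟨α, β, h, hα, hβ, hc⟩ := Λ.factor_exists μ (Pi.single i 1)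
      (fun j => Λ.d μ j - (Pi.single i 1 : NK k) j) (by
        funext j
        show Λ.d μ j = (Pi.single i 1 : NK k) j + (Λ.d μ j - (Pi.single i 1 : NK k) j)
        rcases eq_or_ne j i with rfl | hj
        · simp only [Pi.single_eq_same]; omega
        · simp [Pi.single_eq_of_ne hj])
    exact ⟨(α, β), i, h, hα, hc⟩)

lemma peelSpec_edge (Λ : KGraph k) (μ : Λ.Mor) (hμ : Λ.d μ ≠ 0) :
    IsEdge Λ (peelSpec Λ μ hμ).1.1 := by
  obtain ⟨i, h, hd, hc⟩ := (peelSpec Λ μ hμ).2; exact ⟨i, hd⟩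

lemma peelSpec_s (Λ : KGraph k) (μ : Λ.Mor) (hμ : Λ.d μ ≠ 0) :
    Λ.s (peelSpec Λ μ hμ).1.1 = Λ.r (peelSpec Λ μ hμ).1.2 := by
  obtain ⟨i, h, hd, hc⟩ := (peelSpec Λ μ hμ).2; exact h

lemma peelSpec_comp (Λ : KGraph k) (μ : Λ.Mor) (hμ : Λ.d μ ≠ 0) :
    Λ.comp (peelSpec Λ μ hμ).1.1 (peelSpec Λ μ hμ).1.2 (peelSpec_s Λ μ hμ) = μ := by
  obtain ⟨i, h, hd, hc⟩ := (peelSpec Λ μ hμ).2; exact hc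

lemma peelSpec_d (Λ : KGraph k) (μ : Λ.Mor) (hμ : Λ.d μ ≠ 0) :
    Λ.d μ = Λ.d (peelSpec Λ μ hμ).1.1 + Λ.d (peelSpec Λ μ hμ).1.2 := by
  conv_lhs => rw [← peelSpec_comp Λ μ hμ]
  exact Λ.d_comp _ _ _

lemma peelSpec_lt (Λ : KGraph k) (μ : Λ.Mor) (hμ : Λ.d μ ≠ 0) :
    sz (Λ.d (peelSpec Λ μ hμ).1.2) < sz (Λ.d μ) := by
  obtain ⟨i, hd⟩ := peelSpec_edge Λ μ hμ
  have h1 := peelSpec_d Λ μ hμ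
  rw [h1, sz_add, hd, sz_single]
  omega

/-- Bundled data for statement 2. -/
structure Pre {k : ℕ} (G : Type) [Group G] (Λ : KGraph k) where
  a : G → Λ.Mor → Λ.Mor
  rh : G → Λ.Mor → G
  hone : ∀ μ, VorE Λ μ → a 1 μ = μ
  hmul : ∀ (g h : G) (μ), VorE Λ μ → a (g * h) μ = a g (a h μ)
  hd : ∀ g μ, VorE Λ μ → Λ.d (a g μ) = Λ.d μ
  hs : ∀ g μ, IsEdge Λ μ → a g (Λ.ofObj (Λ.s μ)) = Λ.ofObj (Λ.s (a g μ))
  hr : ∀ g μ, IsEdge Λ μ → a g (Λ.ofObj (Λ.r μ)) = Λ.ofObj (Λ.r (a g μ))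
  hiii : ∀ g μ ν, IsEdge Λ μ → Λ.s μ = Λ.r ν →
      a (rh g μ) (Λ.ofObj (Λ.s ν)) = a g (Λ.ofObj (Λ.s ν))
  hiv : ∀ (g : G) (μ ν α β : Λ.Mor) (h₁ : Λ.s μ = Λ.r ν) (h₂ : Λ.s α = Λ.r β),
      IsEdge Λ μ → IsEdge Λ ν → IsEdge Λ α → IsEdge Λ β →
      Λ.comp μ ν h₁ = Λ.comp α β h₂ →
      ∀ (p₁ : Λ.s (a g μ) = Λ.r (a (rh g μ) ν)) (p₂ : Λ.s (a g α) = Λ.r (a (rh g α) β)),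
        Λ.comp (a g μ) (a (rh g μ) ν) p₁ = Λ.comp (a g α) (a (rh g α) β) p₂
  hv : ∀ g v, rh g (Λ.ofObj v) = g
  hvi : ∀ (g : G) (μ ν α β : Λ.Mor) (h₁ : Λ.s μ = Λ.r ν) (h₂ : Λ.s α = Λ.r β),
      IsEdge Λ μ → IsEdge Λ ν → IsEdge Λ α → IsEdge Λ β →
      Λ.comp μ ν h₁ = Λ.comp α β h₂ → rh (rh g μ) ν = rh (rh g α) β
  hvii : ∀ (g h : G) (μ), VorE Λ μ → rh (g * h) μ = rh g (a h μ) * rh h μ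

lemma Pre.hiii' (P : Pre G Λ) (g : G) {e : Λ.Mor} (he : IsEdge Λ e) :
    P.a (P.rh g e) (Λ.ofObj (Λ.s e)) = P.a g (Λ.ofObj (Λ.s e)) := by
  have h := P.hiii g e (Λ.ofObj (Λ.s e)) he (Λ.r_ofObj _).symm
  rwa [Λ.s_ofObj] at h

lemma Pre.ecompat (P : Pre G Λ) (g : G) {e f : Λ.Mor} (he : IsEdge Λ e) (hf : IsEdge Λ f)
    (h : Λ.s e = Λ.r f) : Λ.s (P.a g e) = Λ.r (P.a (P.rh g e) f) := by
  apply ofObj_inj Λ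
  rw [← P.hs g e he, ← P.hr (P.rh g e) f hf, ← h]
  exact (P.hiii' g he).symm

/-- Invariant carried through the recursion. -/
def ArInv (P : Pre G Λ) (g : G) (μ : Λ.Mor) (p : Λ.Mor × G) : Prop :=
  Λ.d p.1 = Λ.d μ ∧ Λ.ofObj (Λ.r p.1) = P.a g (Λ.ofObj (Λ.r μ)) ∧
  Λ.ofObj (Λ.s p.1) = P.a g (Λ.ofObj (Λ.s μ)) ∧
  P.a p.2 (Λ.ofObj (Λ.s μ)) = P.a g (Λ.ofObj (Λ.s μ))

lemma arInv_base (P : Pre G Λ) {μ : Λ.Mor} (hμ : Λ.d μ = 0) (g : G) :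
    ArInv P g μ (P.a g μ, P.rh g μ) := by
  obtain ⟨v, rfl⟩ := Λ.eq_ofObj_of_d_eq_zero μ hμ
  have hd0 : Λ.d (P.a g (Λ.ofObj v)) = 0 := by rw [P.hd g _ (Or.inl hμ)]; exact Λ.d_ofObj v
  obtain ⟨w, hw⟩ := Λ.eq_ofObj_of_d_eq_zero _ hd0
  refine ⟨by rw [hd0, Λ.d_ofObj], ?_, ?_, ?_⟩
  · simp only [hw, Λ.r_ofObj]
  · simp only [hw, Λ.s_ofObj]
  · rw [P.hv g v]

lemma arInv_compat (P : Pre G Λ) {e ν : Λ.Mor} {g : G} {p : Λ.Mor × G} (he : IsEdge Λ e)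
    (h : Λ.s e = Λ.r ν) (hp : ArInv P (P.rh g e) ν p) : Λ.s (P.a g e) = Λ.r p.1 := by
  apply ofObj_inj Λ
  rw [← P.hs g e he, hp.2.1, ← h, P.hiii' g he]

lemma arInv_step (P : Pre G Λ) {e ν : Λ.Mor} {g : G} {p : Λ.Mor × G} (he : IsEdge Λ e)
    (h : Λ.s e = Λ.r ν) (hp : ArInv P (P.rh g e) ν p) (hcm : Λ.s (P.a g e) = Λ.r p.1) :
    ArInv P g (Λ.comp e ν h) (Λ.comp (P.a g e) p.1 hcm, p.2) := by
  refine ⟨?_, ?_, ?_, ?_⟩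
  · rw [Λ.d_comp, Λ.d_comp, hp.1, P.hd g e (Or.inr he)]
  · rw [Λ.r_comp, Λ.r_comp, ← P.hr g e he]
  · rw [Λ.s_comp, Λ.s_comp, hp.2.2.1, P.hiii g e ν he h]
  · rw [Λ.s_comp e ν h, hp.2.2.2, P.hiii g e ν he h]

lemma arInv_cast (P : Pre G Λ) {g : G} {μ μ' : Λ.Mor} {p : Λ.Mor × G} (h : μ = μ')
    (hp : ArInv P g μ p) : ArInv P g μ' p := h ▸ hp

/-- The recursive extension of the action/restriction. -/
noncomputable def arAux (P : Pre G Λ) (μ : Λ.Mor) (g : G) : {p : Λ.Mor × G // ArInv P g μ p} :=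
  if hμ : Λ.d μ = 0 then ⟨(P.a g μ, P.rh g μ), arInv_base P hμ g⟩
  else
    ⟨(Λ.comp (P.a g (peelSpec Λ μ hμ).1.1)
        (arAux P (peelSpec Λ μ hμ).1.2 (P.rh g (peelSpec Λ μ hμ).1.1)).1.1
        (arInv_compat P (peelSpec_edge Λ μ hμ) (peelSpec_s Λ μ hμ)
          (arAux P (peelSpec Λ μ hμ).1.2 (P.rh g (peelSpec Λ μ hμ).1.1)).2),
      (arAux P (peelSpec Λ μ hμ).1.2 (P.rh g (peelSpec Λ μ hμ).1.1)).1.2),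
     arInv_cast P (peelSpec_comp Λ μ hμ) (arInv_step P (peelSpec_edge Λ μ hμ) (peelSpec_s Λ μ hμ)
        (arAux P (peelSpec Λ μ hμ).1.2 (P.rh g (peelSpec Λ μ hμ).1.1)).2
        (arInv_compat P (peelSpec_edge Λ μ hμ) (peelSpec_s Λ μ hμ)
          (arAux P (peelSpec Λ μ hμ).1.2 (P.rh g (peelSpec Λ μ hμ).1.1)).2))⟩
termination_by sz (Λ.d μ)
decreasing_by all_goals exact peelSpec_lt Λ μ hμ

noncomputable def actF (P : Pre G Λ) (g : G) (μ : Λ.Mor) : Λ.Mor := (arAux P μ g).1.1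
noncomputable def resF (P : Pre G Λ) (g : G) (μ : Λ.Mor) : G := (arAux P μ g).1.2

lemma actF_d (P : Pre G Λ) (g : G) (μ : Λ.Mor) : Λ.d (actF P g μ) = Λ.d μ :=
  (arAux P μ g).2.1
lemma actF_r (P : Pre G Λ) (g : G) (μ : Λ.Mor) :
    Λ.ofObj (Λ.r (actF P g μ)) = P.a g (Λ.ofObj (Λ.r μ)) := (arAux P μ g).2.2.1
lemma actF_s (P : Pre G Λ) (g : G) (μ : Λ.Mor) :
    Λ.ofObj (Λ.s (actF P g μ)) = P.a g (Λ.ofObj (Λ.s μ)) := (arAux P μ g).2.2.2.1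
lemma resF_act (P : Pre G Λ) (g : G) (μ : Λ.Mor) :
    P.a (resF P g μ) (Λ.ofObj (Λ.s μ)) = P.a g (Λ.ofObj (Λ.s μ)) := (arAux P μ g).2.2.2.2

lemma compatM (P : Pre G Λ) (g : G) {e ν : Λ.Mor} (he : IsEdge Λ e) (h : Λ.s e = Λ.r ν) :
    Λ.s (P.a g e) = Λ.r (actF P (P.rh g e) ν) :=
  arInv_compat P he h (arAux P ν (P.rh g e)).2

lemma compatF (P : Pre G Λ) (g : G) {μ ν : Λ.Mor} (h : Λ.s μ = Λ.r ν) :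
    Λ.s (actF P g μ) = Λ.r (actF P (resF P g μ) ν) := by
  apply ofObj_inj Λ
  rw [actF_s, actF_r, ← h, resF_act]

lemma arAux_zero (P : Pre G Λ) {μ : Λ.Mor} (hμ : Λ.d μ = 0) (g : G) :
    (arAux P μ g).1 = (P.a g μ, P.rh g μ) := by
  rw [arAux, dif_pos hμ]

lemma actF_zero (P : Pre G Λ) (g : G) {μ : Λ.Mor} (hμ : Λ.d μ = 0) :
    actF P g μ = P.a g μ := congrArg Prod.fst (arAux_zero P hμ g)

lemma resF_zero (P : Pre G Λ) (g : G) {μ : Λ.Mor} (hμ : Λ.d μ = 0) :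
    resF P g μ = P.rh g μ := congrArg Prod.snd (arAux_zero P hμ g)

lemma arAux_pos (P : Pre G Λ) (μ : Λ.Mor) (g : G) (hμ : Λ.d μ ≠ 0) :
    actF P g μ = Λ.compo (P.a g (peelSpec Λ μ hμ).1.1)
        (actF P (P.rh g (peelSpec Λ μ hμ).1.1) (peelSpec Λ μ hμ).1.2) ∧
    resF P g μ = resF P (P.rh g (peelSpec Λ μ hμ).1.1) (peelSpec Λ μ hμ).1.2 := by
  constructor
  · show (arAux P μ g).1.1 = _
    rw [arAux, dif_neg hμ,
      compo_eq Λ (compatM P g (peelSpec_edge Λ μ hμ) (peelSpec_s Λ μ hμ))]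
    rfl
  · show (arAux P μ g).1.2 = _
    rw [arAux, dif_neg hμ]
    rfl

lemma ar_peel (P : Pre G Λ) (N : ℕ) :
    ∀ (ν e : Λ.Mor) (g : G), IsEdge Λ e → ∀ (h : Λ.s e = Λ.r ν), sz (Λ.d ν) ≤ N →
      actF P g (Λ.comp e ν h) = Λ.compo (P.a g e) (actF P (P.rh g e) ν) ∧
      resF P g (Λ.comp e ν h) = resF P (P.rh g e) ν := by
  induction N using Nat.strong_induction_on with
  | _ N IH =>
  intro ν e g he h hN
  obtain ⟨i, hde⟩ := he
  have hμ : Λ.d (Λ.comp e ν h) ≠ 0 := by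
    intro h0
    have h1 := congrFun (Λ.d_comp e ν h) i
    rw [h0, hde] at h1
    simp only [Pi.zero_apply, Pi.add_apply, Pi.single_eq_same] at h1
    omega
  obtain ⟨hA1, hA2⟩ := arAux_pos P (Λ.comp e ν h) g hμ
  obtain ⟨i₀, hdE⟩ := peelSpec_edge Λ (Λ.comp e ν h) hμ
  have hEs := peelSpec_s Λ (Λ.comp e ν h) hμ
  have hEc := peelSpec_comp Λ (Λ.comp e ν h) hμ
  set E := (peelSpec Λ (Λ.comp e ν h) hμ).1.1 with hEdef
  set V := (peelSpec Λ (Λ.comp e ν h) hμ).1.2 with hVdef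
  have hdμ : Λ.d (Λ.comp e ν h) = Λ.d e + Λ.d ν := Λ.d_comp e ν h
  have hdμ' : Λ.d (Λ.comp e ν h) = Λ.d E + Λ.d V := by
    conv_lhs => rw [← hEc]
    exact Λ.d_comp E V hEs
  by_cases hii : i₀ = i
  · subst hii
    obtain ⟨hEe, hVν⟩ := Λ.factor_unique E V e ν hEs h (by rw [hdE, hde]) hEc
    constructor
    · rw [hA1, hEe, hVν]
    · rw [hA2, hEe, hVν]
  · -- coordinatewise degree facts
    have c1 := congrFun hdμ i₀
    have c2 := congrFun hdμ' i₀
    have c3 := congrFun hdμ i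
    have c4 := congrFun hdμ' i
    rw [hde] at c1 c3
    rw [hdE] at c2 c4
    simp only [Pi.add_apply, Pi.single_eq_same, Pi.single_eq_of_ne (Ne.symm hii),
      Pi.single_eq_of_ne hii] at c1 c2 c3 c4
    -- c1 : d μ i₀ = 0 + d ν i₀ ; c2 : d μ i₀ = 1 + d V i₀ ; c3 : d μ i = 1 + d ν i ; c4 : d μ i = 0 + d V i
    obtain ⟨f, ν₁, hsf, hdf, hdν₁, hcf⟩ := Λ.factor_exists ν (Pi.single i₀ 1)
      (fun j => Λ.d ν j - (Pi.single i₀ 1 : NK k) j) (by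
        funext j
        show Λ.d ν j = (Pi.single i₀ 1 : NK k) j + (Λ.d ν j - (Pi.single i₀ 1 : NK k) j)
        rcases eq_or_ne j i₀ with rfl | hj
        · simp only [Pi.single_eq_same]; omega
        · simp [Pi.single_eq_of_ne hj])
    obtain ⟨f₀, ν₂, hsf₀, hdf₀, hdν₂, hcf₀⟩ := Λ.factor_exists V (Pi.single i 1)
      (fun j => Λ.d V j - (Pi.single i 1 : NK k) j) (by
        funext j
        show Λ.d V j = (Pi.single i 1 : NK k) j + (Λ.d V j - (Pi.single i 1 : NK k) j)
        rcases eq_or_ne j i with rfl | hj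
        · simp only [Pi.single_eq_same]; omega
        · simp [Pi.single_eq_of_ne hj])
    have hef : Λ.s e = Λ.r f := h.trans (by rw [← hcf, Λ.r_comp])
    have hEf₀ : Λ.s E = Λ.r f₀ := hEs.trans (by rw [← hcf₀, Λ.r_comp])
    have hq1 : Λ.s (Λ.comp e f hef) = Λ.r ν₁ := (Λ.s_comp e f hef).trans hsf
    have hq2 : Λ.s (Λ.comp E f₀ hEf₀) = Λ.r ν₂ := (Λ.s_comp E f₀ hEf₀).trans hsf₀
    have hbig1 : Λ.comp (Λ.comp e f hef) ν₁ hq1 = Λ.comp e ν h :=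
      (Λ.comp_assoc e f ν₁ hef hsf).trans (Λ.comp_congr hcf _ _)
    have hbig2 : Λ.comp (Λ.comp E f₀ hEf₀) ν₂ hq2 = Λ.comp e ν h :=
      ((Λ.comp_assoc E f₀ ν₂ hEf₀ hsf₀).trans (Λ.comp_congr hcf₀ _ _)).trans hEc
    have hdsq : Λ.d (Λ.comp e f hef) = Λ.d (Λ.comp E f₀ hEf₀) := by
      rw [Λ.d_comp, Λ.d_comp, hde, hdE, hdf, hdf₀]
      exact add_comm _ _
    obtain ⟨hτ, hν₁₂⟩ := Λ.factor_unique (Λ.comp e f hef) ν₁ (Λ.comp E f₀ hEf₀) ν₂ hq1 hq2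
      hdsq (hbig1.trans hbig2.symm)
    have hgr : P.rh (P.rh g e) f = P.rh (P.rh g E) f₀ :=
      P.hvi g e f E f₀ hef hEf₀ ⟨i, hde⟩ ⟨i₀, hdf⟩ ⟨i₀, hdE⟩ ⟨i, hdf₀⟩ hτ
    have hpath : Λ.compo (P.a g e) (P.a (P.rh g e) f) =
        Λ.compo (P.a g E) (P.a (P.rh g E) f₀) := by
      rw [compo_eq Λ (P.ecompat g ⟨i, hde⟩ ⟨i₀, hdf⟩ hef),
        compo_eq Λ (P.ecompat g ⟨i₀, hdE⟩ ⟨i, hdf₀⟩ hEf₀)]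
      exact P.hiv g e f E f₀ hef hEf₀ ⟨i, hde⟩ ⟨i₀, hdf⟩ ⟨i₀, hdE⟩ ⟨i, hdf₀⟩ hτ _ _
    have hszν : sz (Λ.d ν₁) + 1 = sz (Λ.d ν) := by
      have hdd : Λ.d ν = Λ.d f + Λ.d ν₁ := by
        conv_lhs => rw [← hcf]
        exact Λ.d_comp f ν₁ hsf
      rw [hdd, sz_add, hdf, sz_single]
      omega
    have hszV : sz (Λ.d V) = sz (Λ.d ν) := by
      have h5 := hdμ.symm.trans hdμ'
      have h6 := congrArg sz h5
      rw [sz_add, sz_add, hde, hdE, sz_single, sz_single] at h6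
      omega
    have hszν₂ : sz (Λ.d ν₂) + 1 = sz (Λ.d V) := by
      have hdd : Λ.d V = Λ.d f₀ + Λ.d ν₂ := by
        conv_lhs => rw [← hcf₀]
        exact Λ.d_comp f₀ ν₂ hsf₀
      rw [hdd, sz_add, hdf₀, sz_single]
      omega
    have hN1 : 1 ≤ N := le_trans (by omega) hN
    obtain ⟨hL1, hL2⟩ := IH (N - 1) (by omega) ν₂ f₀ (P.rh g E) ⟨i, hdf₀⟩ hsf₀ (by omega)
    obtain ⟨hR1, hR2⟩ := IH (N - 1) (by omega) ν₁ f (P.rh g e) ⟨i₀, hdf⟩ hsf (by omega)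
    have keyL : actF P (P.rh g E) V =
        Λ.compo (P.a (P.rh g E) f₀) (actF P (P.rh (P.rh g E) f₀) ν₂) :=
      (congrArg (actF P (P.rh g E)) hcf₀).symm.trans hL1
    have keyR : actF P (P.rh g e) ν =
        Λ.compo (P.a (P.rh g e) f) (actF P (P.rh (P.rh g e) f) ν₁) :=
      (congrArg (actF P (P.rh g e)) hcf).symm.trans hR1
    have keyL2 : resF P (P.rh g E) V = resF P (P.rh (P.rh g E) f₀) ν₂ :=
      (congrArg (resF P (P.rh g E)) hcf₀).symm.trans hL2
    have keyR2 : resF P (P.rh g e) ν = resF P (P.rh (P.rh g e) f) ν₁ :=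
      (congrArg (resF P (P.rh g e)) hcf).symm.trans hR2
    constructor
    · rw [hA1, keyL, keyR,
        compo_assoc Λ (P.ecompat g ⟨i₀, hdE⟩ ⟨i, hdf₀⟩ hEf₀) (compatM P (P.rh g E) ⟨i, hdf₀⟩ hsf₀),
        compo_assoc Λ (P.ecompat g ⟨i, hde⟩ ⟨i₀, hdf⟩ hef) (compatM P (P.rh g e) ⟨i₀, hdf⟩ hsf),
        ← hpath, hgr, hν₁₂]
    · rw [hA2, keyL2, keyR2, hgr, hν₁₂]

lemma ar_peel' (P : Pre G Λ) {e ν : Λ.Mor} (g : G) (he : IsEdge Λ e) (h : Λ.s e = Λ.r ν) :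
    actF P g (Λ.comp e ν h) = Λ.compo (P.a g e) (actF P (P.rh g e) ν) ∧
    resF P g (Λ.comp e ν h) = resF P (P.rh g e) ν :=
  ar_peel P (sz (Λ.d ν)) ν e g he h le_rfl

lemma ar_edge (P : Pre G Λ) (g : G) {μ : Λ.Mor} (he : IsEdge Λ μ) :
    actF P g μ = P.a g μ ∧ resF P g μ = P.rh g μ := by
  have hv' : Λ.s μ = Λ.r (Λ.ofObj (Λ.s μ)) := (Λ.r_ofObj _).symm
  have hc : Λ.comp μ (Λ.ofObj (Λ.s μ)) hv' = μ := Λ.comp_ofObj μ hv'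
  have hd0 : Λ.d (Λ.ofObj (Λ.s μ)) = 0 := Λ.d_ofObj _
  obtain ⟨h1, h2⟩ := ar_peel' P g he hv'
  rw [hc] at h1 h2
  constructor
  · rw [h1, actF_zero P (P.rh g μ) hd0, P.hiii' g he, P.hs g μ he,
      compo_eq Λ (Λ.r_ofObj (Λ.s (P.a g μ))).symm]
    exact Λ.comp_ofObj (P.a g μ) _
  · rw [h2, resF_zero P (P.rh g μ) hd0, P.hv]

lemma ar_vore (P : Pre G Λ) (g : G) {μ : Λ.Mor} (h : VorE Λ μ) :
    actF P g μ = P.a g μ ∧ resF P g μ = P.rh g μ :=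
  h.elim (fun h0 => ⟨actF_zero P g h0, resF_zero P g h0⟩) (fun he => ar_edge P g he)

lemma rho_one (P : Pre G Λ) {μ : Λ.Mor} (h : VorE Λ μ) : P.rh 1 μ = 1 := by
  have h1 := P.hvii 1 1 μ h
  rw [one_mul, P.hone μ h] at h1
  exact right_eq_mul.mp h1

lemma ar_one (P : Pre G Λ) (N : ℕ) :
    ∀ μ : Λ.Mor, sz (Λ.d μ) ≤ N → actF P 1 μ = μ ∧ resF P 1 μ = 1 := by
  induction N using Nat.strong_induction_on with
  | _ N IH =>
  intro μ hN
  by_cases hμ : Λ.d μ = 0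
  · exact ⟨(actF_zero P 1 hμ).trans (P.hone μ (Or.inl hμ)),
      (resF_zero P 1 hμ).trans (rho_one P (Or.inl hμ))⟩
  · obtain ⟨hA1, hA2⟩ := arAux_pos P μ 1 hμ
    have hEe := peelSpec_edge Λ μ hμ
    have hlt := peelSpec_lt Λ μ hμ
    have hρ1 : P.rh 1 (peelSpec Λ μ hμ).1.1 = 1 := rho_one P (Or.inr hEe)
    obtain ⟨hI1, hI2⟩ := IH (sz (Λ.d (peelSpec Λ μ hμ).1.2)) (lt_of_lt_of_le hlt hN) _ le_rfl
    constructor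
    · rw [hA1, hρ1, hI1, P.hone _ (Or.inr hEe), compo_eq Λ (peelSpec_s Λ μ hμ)]
      exact peelSpec_comp Λ μ hμ
    · rw [hA2, hρ1, hI2]

lemma ar_mul (P : Pre G Λ) (N : ℕ) :
    ∀ μ : Λ.Mor, sz (Λ.d μ) ≤ N → ∀ g h : G,
      actF P (g * h) μ = actF P g (actF P h μ) ∧
      resF P (g * h) μ = resF P g (actF P h μ) * resF P h μ := by
  induction N using Nat.strong_induction_on with
  | _ N IH =>
  intro μ hN g h
  by_cases hμ : Λ.d μ = 0
  · have hdh : Λ.d (P.a h μ) = 0 := by rw [P.hd h μ (Or.inl hμ)]; exact hμ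
    constructor
    · rw [actF_zero P (g * h) hμ, actF_zero P h hμ, actF_zero P g hdh]
      exact P.hmul g h μ (Or.inl hμ)
    · rw [resF_zero P (g * h) hμ, actF_zero P h hμ, resF_zero P g hdh, resF_zero P h hμ]
      exact P.hvii g h μ (Or.inl hμ)
  · have hEe := peelSpec_edge Λ μ hμ
    have hEs := peelSpec_s Λ μ hμ
    have hlt := peelSpec_lt Λ μ hμ
    obtain ⟨hA1, hA2⟩ := arAux_pos P μ (g * h) hμ
    obtain ⟨hB1, hB2⟩ := arAux_pos P μ h hμ
    set E := (peelSpec Λ μ hμ).1.1 with hEdef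
    set V := (peelSpec Λ μ hμ).1.2 with hVdef
    have haE : IsEdge Λ (P.a h E) := by
      obtain ⟨i, hdE⟩ := hEe
      exact ⟨i, by rw [P.hd h E (Or.inr ⟨i, hdE⟩)]; exact hdE⟩
    have hcm : Λ.s (P.a h E) = Λ.r (actF P (P.rh h E) V) := compatM P h hEe hEs
    have hB1' : actF P h μ = Λ.comp (P.a h E) (actF P (P.rh h E) V) hcm :=
      hB1.trans (compo_eq Λ hcm)
    obtain ⟨hP1, hP2⟩ := ar_peel' P g haE hcm
    obtain ⟨hI1, hI2⟩ := IH (sz (Λ.d V)) (lt_of_lt_of_le hlt hN) V le_rfl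
      (P.rh g (P.a h E)) (P.rh h E)
    have hvii' : P.rh (g * h) E = P.rh g (P.a h E) * P.rh h E := P.hvii g h E (Or.inr hEe)
    have hmul' : P.a (g * h) E = P.a g (P.a h E) := P.hmul g h E (Or.inr hEe)
    constructor
    · rw [hA1, hB1', hP1, hmul', hvii', hI1]
    · rw [hA2, hB1', hP2, hB2, hvii', hI2]

lemma ar_comp (P : Pre G Λ) (N : ℕ) :
    ∀ μ : Λ.Mor, sz (Λ.d μ) ≤ N → ∀ (ν : Λ.Mor) (h : Λ.s μ = Λ.r ν) (g : G),
      actF P g (Λ.comp μ ν h) = Λ.compo (actF P g μ) (actF P (resF P g μ) ν) ∧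
      resF P g (Λ.comp μ ν h) = resF P (resF P g μ) ν := by
  induction N using Nat.strong_induction_on with
  | _ N IH =>
  intro μ hN ν h g
  by_cases hμ : Λ.d μ = 0
  · obtain ⟨v, hv0⟩ := Λ.eq_ofObj_of_d_eq_zero μ hμ
    have hμr : μ = Λ.ofObj (Λ.r ν) := by
      rw [hv0]; congr 1
      rw [← h, hv0, Λ.s_ofObj]
    subst hμr
    have hcomp := Λ.ofObj_comp ν h
    have hres : resF P g (Λ.ofObj (Λ.r ν)) = g := by
      rw [resF_zero P g (Λ.d_ofObj _)]; exact P.hv g _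
    constructor
    · rw [hcomp, actF_zero P g (Λ.d_ofObj _), hres]
      have hro : P.a g (Λ.ofObj (Λ.r ν)) = Λ.ofObj (Λ.r (actF P g ν)) := (actF_r P g ν).symm
      rw [hro, compo_eq Λ (Λ.s_ofObj (Λ.r (actF P g ν)))]
      exact (Λ.ofObj_comp (actF P g ν) _).symm
    · rw [hcomp, hres]
  · have hEe := peelSpec_edge Λ μ hμ
    have hEs := peelSpec_s Λ μ hμ
    have hEc := peelSpec_comp Λ μ hμ
    have hlt := peelSpec_lt Λ μ hμ
    obtain ⟨hq1, hq2⟩ := arAux_pos P μ g hμ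
    set E := (peelSpec Λ μ hμ).1.1 with hEdef
    set V := (peelSpec Λ μ hμ).1.2 with hVdef
    have hsV : Λ.s V = Λ.r ν := by rw [← h, ← hEc, Λ.s_comp]
    have hbig : Λ.comp μ ν h =
        Λ.comp E (Λ.comp V ν hsV) (hEs.trans (Λ.r_comp V ν hsV).symm) :=
      (comp_congr₂ Λ hEc.symm rfl h ((Λ.s_comp E V hEs).trans hsV)).trans
        (Λ.comp_assoc E V ν hEs hsV)
    obtain ⟨hI1, hI2⟩ := IH (sz (Λ.d V)) (lt_of_lt_of_le hlt hN) V le_rfl ν hsV (P.rh g E)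
    obtain ⟨hp1, hp2⟩ := ar_peel' P g hEe (hEs.trans (Λ.r_comp V ν hsV).symm)
    constructor
    · rw [hbig, hp1, hI1, hq1, hq2]
      exact compo_assoc Λ (compatM P g hEe hEs) (compatF P (P.rh g E) hsV)
    · rw [hbig, hp2, hI2, hq2]

lemma ss_ext (S T : SelfSimilar k G Λ) (h1 : S.act = T.act) (h2 : S.res = T.res) : S = T := by
  cases S; cases T
  simp only at h1 h2
  subst h1; subst h2
  rfl

lemma ar_uniq (P : Pre G Λ) (S : SelfSimilar k G Λ)
    (hext : ∀ g μ, VorE Λ μ → S.act g μ = P.a g μ ∧ S.res g μ = P.rh g μ) (N : ℕ) :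
    ∀ μ : Λ.Mor, sz (Λ.d μ) ≤ N → ∀ g : G,
      S.act g μ = actF P g μ ∧ S.res g μ = resF P g μ := by
  induction N using Nat.strong_induction_on with
  | _ N IH =>
  intro μ hN g
  by_cases hμ : Λ.d μ = 0
  · obtain ⟨h1, h2⟩ := hext g μ (Or.inl hμ)
    exact ⟨h1.trans (actF_zero P g hμ).symm, h2.trans (resF_zero P g hμ).symm⟩
  · have hEe := peelSpec_edge Λ μ hμ
    have hEs := peelSpec_s Λ μ hμ
    have hEc := peelSpec_comp Λ μ hμ
    have hlt := peelSpec_lt Λ μ hμ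
    obtain ⟨hq1, hq2⟩ := arAux_pos P μ g hμ
    set E := (peelSpec Λ μ hμ).1.1 with hEdef
    set V := (peelSpec Λ μ hμ).1.2 with hVdef
    have hSc : S.act g μ = Λ.comp (S.act g E) (S.act (S.res g E) V) (S.compat g E V hEs) := by
      have h3 := S.act_comp g E V hEs
      rw [hEc] at h3
      exact h3
    have hSr : S.res g μ = S.res (S.res g E) V := by
      have h3 := S.res_comp g E V hEs
      rw [hEc] at h3
      exact h3
    obtain ⟨he1, he2⟩ := hext g E (Or.inr hEe)
    obtain ⟨hI1, hI2⟩ := IH (sz (Λ.d V)) (lt_of_lt_of_le hlt hN) V le_rfl (P.rh g E)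
    constructor
    · rw [hSc, hq1, compo_eq Λ (compatM P g hEe hEs)]
      exact comp_congr₂ Λ he1 (by rw [he2, hI1]) _ _
    · rw [hSr, he2, hI2, hq2]

end Stmt2Aux

/-- a compatible action and restriction on `Λ⁰ ∪ Λᵉ` extends uniquely to a
self-similar action of `G` on `Λ`. -/
theorem stmt2 {k : ℕ} (hk : 0 < k) (G : Type) [Group G] [Countable G] (Λ : KGraph k)
    (a : G → Λ.Mor → Λ.Mor) (ρ : G → Λ.Mor → G)
    (hone : ∀ μ, VorE Λ μ → a 1 μ = μ)
    (hmul : ∀ (g h : G) (μ), VorE Λ μ → a (g * h) μ = a g (a h μ))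
    (hd : ∀ g μ, VorE Λ μ → Λ.d (a g μ) = Λ.d μ)
    (hs : ∀ g μ, IsEdge Λ μ → a g (Λ.ofObj (Λ.s μ)) = Λ.ofObj (Λ.s (a g μ)))
    (hr : ∀ g μ, IsEdge Λ μ → a g (Λ.ofObj (Λ.r μ)) = Λ.ofObj (Λ.r (a g μ)))
    (hiii : ∀ g μ ν, IsEdge Λ μ → Λ.s μ = Λ.r ν →
      a (ρ g μ) (Λ.ofObj (Λ.s ν)) = a g (Λ.ofObj (Λ.s ν)))
    (hiv : ∀ (g : G) (μ ν α β : Λ.Mor) (h₁ : Λ.s μ = Λ.r ν) (h₂ : Λ.s α = Λ.r β),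
      IsEdge Λ μ → IsEdge Λ ν → IsEdge Λ α → IsEdge Λ β →
      Λ.comp μ ν h₁ = Λ.comp α β h₂ →
      ∀ (p₁ : Λ.s (a g μ) = Λ.r (a (ρ g μ) ν)) (p₂ : Λ.s (a g α) = Λ.r (a (ρ g α) β)),
        Λ.comp (a g μ) (a (ρ g μ) ν) p₁ = Λ.comp (a g α) (a (ρ g α) β) p₂)
    (hv : ∀ g v, ρ g (Λ.ofObj v) = g)
    (hvi : ∀ (g : G) (μ ν α β : Λ.Mor) (h₁ : Λ.s μ = Λ.r ν) (h₂ : Λ.s α = Λ.r β),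
      IsEdge Λ μ → IsEdge Λ ν → IsEdge Λ α → IsEdge Λ β →
      Λ.comp μ ν h₁ = Λ.comp α β h₂ → ρ (ρ g μ) ν = ρ (ρ g α) β)
    (hvii : ∀ (g h : G) (μ), VorE Λ μ → ρ (g * h) μ = ρ g (a h μ) * ρ h μ) :
    ∃! S : SelfSimilar k G Λ, ∀ g μ, VorE Λ μ → S.act g μ = a g μ ∧ S.res g μ = ρ g μ := by
  let P : Pre G Λ := ⟨a, ρ, hone, hmul, hd, hs, hr, hiii, hiv, hv, hvi, hvii⟩
  refine ⟨{
    act := actF P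
    res := resF P
    act_one := fun μ => (ar_one P (sz (Λ.d μ)) μ le_rfl).1
    act_mul := fun g h μ => (ar_mul P (sz (Λ.d μ)) μ le_rfl g h).1
    act_d := actF_d P
    act_ofObj_r := fun g μ => by
      rw [actF_zero P g (Λ.d_ofObj _)]
      exact (actF_r P g μ).symm
    act_ofObj_s := fun g μ => by
      rw [actF_zero P g (Λ.d_ofObj _)]
      exact (actF_s P g μ).symm
    compat := fun g μ ν h => compatF P g h
    act_comp := fun g μ ν h => by
      rw [(ar_comp P (sz (Λ.d μ)) μ le_rfl ν h g).1, compo_eq Λ (compatF P g h)]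
    res_ofObj := fun g v => by
      rw [resF_zero P g (Λ.d_ofObj _)]
      exact hv g v
    res_comp := fun g μ ν h => (ar_comp P (sz (Λ.d μ)) μ le_rfl ν h g).2
    res_one := fun μ => (ar_one P (sz (Λ.d μ)) μ le_rfl).2
    res_mul := fun g h μ => (ar_mul P (sz (Λ.d μ)) μ le_rfl g h).2 }, ?_, ?_⟩
  · intro g μ h
    exact ar_vore P g h
  · intro S hS
    refine ss_ext S _ ?_ ?_
    · funext g μ
      exact (ar_uniq P S (fun g μ h => hS g μ h) (sz (Λ.d μ)) μ le_rfl g).1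
    · funext g μ
      exact (ar_uniq P S (fun g μ h => hS g μ h) (sz (Λ.d μ)) μ le_rfl g).2

end SSKG
end

section
/- Let Λ be a k-graph with a self-similar action of a group G. For every g ∈ G and x ∈ Λ^∞, the assignment (p,q) ↦ g|_{x(0,p)}·x(p,q) defines an infinite path g·x ∈ Λ^∞ (i.e., it is a degree-preserving functor Ω_k → Λ), and the map G × Λ^∞ → Λ^∞, (g, x) ↦ g·x, is a group action of G on Λ^∞: 1_G·x = x and g₁·(g₂·x) = (g₁g₂)·x for all g₁, g₂ ∈ G and x ∈ Λ^∞. -/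
namespace SSKG

variable {k : ℕ} {G : Type} [Group G] {Λ : KGraph k}

/-- `(p,q) ↦ g|_{x(0,p)}·x(p,q)` defines an infinite path `g·x`, and
`(g, x) ↦ g·x` is a group action of `G` on `Λ^∞`. -/
theorem stmt3 {k : ℕ} (hk : 0 < k) (G : Type) [Group G] [Countable G]
    (Λ : KGraph k) (S : SelfSimilar k G Λ) :
    ∃ A : G → InfPath Λ → InfPath Λ,
      (∀ (g : G) (x : InfPath Λ) (p q : NK k) (h : p ≤ q),
        (A g x).seg p q h = S.act (S.res g (x.seg 0 p (le0 p))) (x.seg p q h)) ∧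
      (∀ (g : G) (x y : InfPath Λ),
        (∀ (p q : NK k) (h : p ≤ q),
          y.seg p q h = S.act (S.res g (x.seg 0 p (le0 p))) (x.seg p q h)) → y = A g x) ∧
      (∀ x : InfPath Λ, A 1 x = x) ∧
      (∀ (g₁ g₂ : G) (x : InfPath Λ), A g₁ (A g₂ x) = A (g₁ * g₂) x) := by
  refine ⟨S.actInf, fun g x p q h => rfl, ?_, ?_, ?_⟩
  · intro g x y hy
    apply InfPath.ext'
    funext p q h
    exact hy p q h
  · intro x
    apply InfPath.ext'
    funext p q h
    show S.act (S.res 1 _) _ = _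
    rw [S.res_one, S.act_one]
  · intro g₁ g₂ x
    apply InfPath.ext'
    funext p q h
    show S.act (S.res g₁ (S.act (S.res g₂ (x.seg 0 0 (le0 0))) (x.seg 0 p (le0 p))))
        (S.act (S.res g₂ (x.seg 0 p (le0 p))) (x.seg p q h))
      = S.act (S.res (g₁ * g₂) (x.seg 0 p (le0 p))) (x.seg p q h)
    have h0 : S.res g₂ (x.seg 0 0 (le0 0)) = g₂ := by
      obtain ⟨v, hv⟩ := Λ.eq_ofObj_of_d_eq_zero (x.seg 0 0 (le0 0))
        (by rw [x.d_seg]; funext i; simp)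
      rw [hv, S.res_ofObj]
    rw [h0, ← S.act_mul, ← S.res_mul]

end SSKG
end

section
/- Let Λ be a k-graph with a self-similar action of a group G. Set Λ^e := ⋃_{i=1}^{k} Λ^{e_i}. Suppose that for every g ∈ G and every edge μ ∈ Λ^e, the conditions g·μ = μ and g|_μ = 1_G imply g = 1_G. Then the action is pseudo free, i.e., for every g ∈ G and every μ ∈ Λ, g·μ = μ and g|_μ = 1_G imply g = 1_G. -/
namespace SSKG

variable {k : ℕ} {G : Type} [Group G] {Λ : KGraph k}

/-- if `g·μ = μ` and `g|_μ = 1` force `g = 1` for every edge `μ`, then the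
self-similar action is pseudo free. -/
theorem stmt8 {k : ℕ} (hk : 0 < k) (G : Type) [Group G] [Countable G]
    (Λ : KGraph k) (S : SelfSimilar k G Λ)
    (h : ∀ (g : G) (μ : Λ.Mor), IsEdge Λ μ → S.act g μ = μ → S.res g μ = 1 → g = 1) :
    S.PseudoFree := by
  have key : ∀ N : ℕ, ∀ (μ : Λ.Mor) (g : G), (∑ i, Λ.d μ i) = N →
      S.act g μ = μ → S.res g μ = 1 → g = 1 := by
    intro N
    induction N using Nat.strong_induction_on with
    | _ N ih =>
      intro μ g hN hact hres
      by_cases h0 : Λ.d μ = 0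
      · obtain ⟨v, rfl⟩ := Λ.eq_ofObj_of_d_eq_zero μ h0
        rwa [S.res_ofObj] at hres
      · obtain ⟨i, hi⟩ : ∃ i, 0 < Λ.d μ i := by
          by_contra hc; push_neg at hc
          exact h0 (funext fun i => Nat.le_zero.mp (hc i))
        have hd : Λ.d μ = Pi.single i 1 + (Λ.d μ - Pi.single i 1) := by
          funext j
          by_cases hji : j = i
          · subst hji
            simp only [Pi.add_apply, Pi.sub_apply, Pi.single_eq_same]
            omega
          · simp only [Pi.add_apply, Pi.sub_apply, Pi.single_eq_of_ne hji]
            omega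
        obtain ⟨α, β, hsr, hdα, hdβ, hcomp⟩ := Λ.factor_exists μ _ _ hd
        have h1 : Λ.comp (S.act g α) (S.act (S.res g α) β) (S.compat g α β hsr)
            = Λ.comp α β hsr := by
          rw [← S.act_comp g α β hsr, hcomp, hact]
        have hdeq : Λ.d (S.act g α) = Λ.d α := S.act_d g α
        obtain ⟨hα, hβ⟩ := Λ.factor_unique _ _ _ _ _ _ hdeq h1
        have h2 : S.res (S.res g α) β = 1 := by
          rw [← S.res_comp g α β hsr, hcomp]; exact hres
        have hdsum : Λ.d μ = Λ.d α + Λ.d β := by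
          rw [← hcomp, Λ.d_comp]
        have hα1 : (∑ j, Λ.d α j) = 1 := by
          rw [hdα]
          simp [Finset.sum_pi_single']
        have hβsum : (∑ j, Λ.d β j) < N := by
          have : (∑ j, Λ.d α j) + (∑ j, Λ.d β j) = N := by
            rw [← hN, hdsum, ← Finset.sum_add_distrib]
            rfl
          omega
        have hg1 : S.res g α = 1 := ih _ hβsum β _ rfl hβ h2
        exact h g α ⟨i, hdα⟩ hα hg1
  intro g μ hact hres
  exact key _ μ g rfl hact hres

end SSKG
end

section
/- Let Λ be a k-graph with a pseudo free self-similar action of a group G. Then for all g, g̃ ∈ G and x ∈ Λ^∞: if g·x = g̃·x and there exists z ∈ ℕ^k with g|_{x(0,p)} = g̃|_{x(0,p)} for all p ≥ z (i.e., [g|_x] = [g̃|_x] in Q(ℕ^k,G)), then g = g̃. -/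
namespace SSKG

variable {k : ℕ} {G : Type} [Group G] {Λ : KGraph k}

/-- for a pseudo free action, `g·x = g̃·x` and `[g|_x] = [g̃|_x]` imply
`g = g̃`. -/
theorem stmt10 {k : ℕ} (hk : 0 < k) (G : Type) [Group G] [Countable G]
    (Λ : KGraph k) (S : SelfSimilar k G Λ) (hpf : S.PseudoFree) :
    ∀ (g g' : G) (x : InfPath Λ), S.actInf g x = S.actInf g' x →
      (∃ z : NK k, ∀ p, z ≤ p → S.resInf g x p = S.resInf g' x p) → g = g' := by
  intro g g' x hact ⟨z, hres⟩
  -- μ := x(0,z)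
  set μ := x.seg 0 z (le0 z) with hμ
  -- x(0,0) is a vertex
  obtain ⟨v, hv⟩ := Λ.eq_ofObj_of_d_eq_zero (x.seg 0 0 (le0 0)) (by
    rw [x.d_seg]; funext i; simp)
  -- act g μ = act g' μ
  have hseg := congrArg (fun y : InfPath Λ => y.seg 0 z (le0 z)) hact
  have hresg : S.res g (x.seg 0 0 (le0 0)) = g := by rw [hv, S.res_ofObj]
  have hresg' : S.res g' (x.seg 0 0 (le0 0)) = g' := by rw [hv, S.res_ofObj]
  have hactμ : S.act g μ = S.act g' μ := by
    simpa [SelfSimilar.actInf, hresg, hresg'] using hseg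
  have hresμ : S.res g μ = S.res g' μ := hres z le_rfl
  -- h := g'⁻¹ * g fixes μ with trivial restriction
  have hfix : S.act (g'⁻¹ * g) μ = μ := by
    rw [S.act_mul, hactμ, ← S.act_mul, inv_mul_cancel, S.act_one]
  have hinv : S.res g'⁻¹ (S.act g' μ) * S.res g' μ = 1 := by
    rw [← S.res_mul, inv_mul_cancel, S.res_one]
  have hres1 : S.res (g'⁻¹ * g) μ = 1 := by
    rw [S.res_mul, hactμ, hresμ, hinv]
  exact (inv_mul_eq_one.mp (hpf (g'⁻¹ * g) μ hfix hres1)).symm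

end SSKG
end

section
/- Let Λ be a k-graph with a pseudo free self-similar action of a group G. Then for all g, g' ∈ G and μ, ν, μ', ν' ∈ Λ with s(μ) = g·s(ν) and s(μ') = g'·s(ν'), the intersection of basic sets satisfies Z(μ,g,ν) ∩ Z(μ',g',ν') = ⋃_{(α,α') ∈ F} Z(μ(g·α), g|_α, να), where F := {(α,α') ∈ Λ^min(ν,ν') : (g·α, g'·α') ∈ Λ^min(μ,μ') and g|_α = g'|_{α'}}. In particular, B_{G,Λ} is a base for a topology on G_{G,Λ}. -/
namespace SSKG

variable {k : ℕ} {G : Type} [Group G] {Λ : KGraph k}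

section Helpers

variable {k : ℕ} {G : Type} [Group G] {Λ : KGraph k}

lemma nk_le_add (p q : NK k) : p ≤ p + q :=
  Pi.le_def.mpr fun i => Nat.le_add_right _ _

lemma seg_congr (x : InfPath Λ) {p q p' q' : NK k} (hp : p = p') (hq : q = q')
    (h : p ≤ q) (h' : p' ≤ q') : x.seg p q h = x.seg p' q' h' := by
  subst hp; subst hq; rfl

lemma d_seg0 (x : InfPath Λ) (p : NK k) (h : (0 : NK k) ≤ p) :
    Λ.d (x.seg 0 p h) = p := by
  rw [x.d_seg]; funext i; simp

lemma seg_diag (x : InfPath Λ) {p q : NK k} (hpq : p ≤ q) (h : q ≤ q) :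
    x.seg q q h = Λ.ofObj (Λ.s (x.seg p q hpq)) := by
  obtain ⟨v, hv⟩ := Λ.eq_ofObj_of_d_eq_zero (x.seg q q h)
    (by rw [x.d_seg]; funext i; simp)
  have hr : Λ.r (x.seg q q h) = v := by rw [hv, Λ.r_ofObj]
  rw [x.src_seg p q q hpq h, hr, hv]

lemma src_r_seg0 {x : InfPath Λ} {w : Λ.Obj} (hx0 : x.seg 0 0 le_rfl = Λ.ofObj w)
    (p : NK k) : w = Λ.r (x.seg 0 p (le0 p)) := by
  rw [← x.src_seg 0 0 p le_rfl (le0 p), hx0, Λ.s_ofObj]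

lemma InfPath.ext0 {x y : InfPath Λ}
    (h : ∀ n : NK k, x.seg 0 n (le0 n) = y.seg 0 n (le0 n)) : x = y := by
  apply InfPath.ext'
  funext p q hpq
  have h1 := x.comp_seg 0 p q (le0 p) hpq
  have h2 := y.comp_seg 0 p q (le0 p) hpq
  exact (Λ.factor_unique _ _ _ _ (x.src_seg 0 p q (le0 p) hpq)
    (y.src_seg 0 p q (le0 p) hpq) (by rw [d_seg0, d_seg0])
    (by rw [h1, h2]; exact h q)).2

lemma seg_split {y : InfPath Λ} {μ α : Λ.Mor} {h : Λ.s μ = Λ.r α} {p q : NK k}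
    (hpq : p ≤ q) (hp : Λ.d μ = p)
    (hyq : y.seg 0 q (le0 q) = Λ.comp μ α h) :
    y.seg 0 p (le0 p) = μ ∧ y.seg p q hpq = α := by
  refine Λ.factor_unique _ _ _ _ (y.src_seg 0 p q (le0 p) hpq) h ?_ ?_
  · rw [d_seg0, hp]
  · rw [y.comp_seg 0 p q (le0 p) hpq]; exact hyq

lemma comp_prefix {w : InfPath Λ} {μ : Λ.Mor} (hμ : w.seg 0 (Λ.d μ) (le0 _) = μ)
    {q : NK k} (hq : Λ.d μ ≤ q) (h : Λ.s μ = Λ.r (w.seg (Λ.d μ) q hq)) :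
    Λ.comp μ (w.seg (Λ.d μ) q hq) h = w.seg 0 q (le0 q) := by
  have hc := w.comp_seg 0 (Λ.d μ) q (le0 _) hq
  exact (comp_congr₂ Λ hμ.symm rfl h _).trans hc

lemma res_seg_split (S : SelfSimilar k G Λ) (g : G) (x : InfPath Λ) {p q : NK k}
    (hpq : p ≤ q) :
    S.res g (x.seg 0 q (le0 q))
      = S.res (S.res g (x.seg 0 p (le0 p))) (x.seg p q hpq) := by
  have hc := x.comp_seg 0 p q (le0 p) hpq
  have h1 : S.res g (x.seg 0 q (le0 q))
      = S.res g (Λ.comp (x.seg 0 p (le0 p)) (x.seg p q hpq)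
          (x.src_seg 0 p q (le0 p) hpq)) := congrArg (S.res g) hc.symm
  rw [h1, S.res_comp]

lemma actInf_shift (S : SelfSimilar k G Λ) (g : G) (x : InfPath Λ) (p : NK k) :
    (S.actInf g x).shift p = S.actInf (S.res g (x.seg 0 p (le0 p))) (x.shift p) := by
  apply InfPath.ext'; funext m n h
  show S.act (S.res g (x.seg 0 (m + p) (le0 (m + p))))
      (x.seg (m + p) (n + p) (add_le_add_left h p))
    = S.act (S.res (S.res g (x.seg 0 p (le0 p)))
        (x.seg (0 + p) (m + p) (add_le_add_left (le0 m) p)))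
      (x.seg (m + p) (n + p) (add_le_add_left h p))
  have hple : p ≤ m + p := Pi.le_def.mpr fun i => Nat.le_add_left _ _
  have e1 : x.seg (0 + p) (m + p) (add_le_add_left (le0 m) p)
      = x.seg p (m + p) hple := seg_congr x (zero_add p) rfl _ _
  rw [e1, res_seg_split S g x hple]

lemma concat_unique_x {μ : Λ.Mor} {x z : InfPath Λ} (hc : IsConcat Λ μ x z) :
    x = z.shift (Λ.d μ) := by
  apply InfPath.ext'; funext m n h
  exact (hc.2.2 m n h).symm.trans
    (seg_congr z (add_comm _ _) (add_comm _ _) (add_le_add_right h _)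
      (add_le_add_left h _))

lemma concat_shift {μ : Λ.Mor} {x y : InfPath Λ} (hc : IsConcat Λ μ x y) (p : NK k)
    (h : Λ.s μ = Λ.r (x.seg 0 p (le0 p))) :
    IsConcat Λ (Λ.comp μ (x.seg 0 p (le0 p)) h) (x.shift p) y := by
  obtain ⟨h0, h1, h2⟩ := hc
  have hd : Λ.d (Λ.comp μ (x.seg 0 p (le0 p)) h) = Λ.d μ + p := by
    rw [Λ.d_comp, d_seg0]
  refine ⟨?_, ?_, ?_⟩
  · show x.seg (0 + p) (0 + p) _ = _
    rw [Λ.s_comp]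
    rw [seg_congr x (zero_add p) (zero_add p) (add_le_add_left (le0 0) p) le_rfl]
    exact seg_diag x (le0 p) le_rfl
  · have e : y.seg 0 (Λ.d (Λ.comp μ (x.seg 0 p (le0 p)) h)) (le0 _)
        = y.seg 0 (Λ.d μ + p) (le0 _) := seg_congr y rfl hd _ _
    rw [e]
    have hc2 := y.comp_seg 0 (Λ.d μ) (Λ.d μ + p) (le0 _) (nk_le_add _ _)
    have e4 : y.seg (Λ.d μ) (Λ.d μ + p) (nk_le_add _ _)
        = x.seg 0 p (le0 p) :=
      (seg_congr y (add_zero _).symm rfl _ (add_le_add_right (le0 p) _)).trans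
        (h2 0 p (le0 p))
    exact hc2.symm.trans (comp_congr₂ Λ h1 e4 _ h)
  · intro m n hmn
    have e := seg_congr y
      (show Λ.d (Λ.comp μ (x.seg 0 p (le0 p)) h) + m = Λ.d μ + (m + p) by
        rw [hd]; funext i; simp [Pi.add_apply]; omega)
      (show Λ.d (Λ.comp μ (x.seg 0 p (le0 p)) h) + n = Λ.d μ + (n + p) by
        rw [hd]; funext i; simp [Pi.add_apply]; omega)
      (add_le_add_right hmn _) (add_le_add_right (add_le_add_left hmn p) _)
    exact e.trans (h2 (m + p) (n + p) (add_le_add_left hmn p))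

lemma isConcat_shift_self {μ : Λ.Mor} {y : InfPath Λ}
    (h : y.seg 0 (Λ.d μ) (le0 _) = μ) :
    IsConcat Λ μ (y.shift (Λ.d μ)) y := by
  refine ⟨?_, h, ?_⟩
  · show y.seg (0 + Λ.d μ) (0 + Λ.d μ) _ = _
    rw [seg_congr y (zero_add _) (zero_add _) (add_le_add_left (le0 0) _) le_rfl,
      seg_diag y (le0 (Λ.d μ)) le_rfl, h]
  · intro m n hmn
    exact (seg_congr y (add_comm (Λ.d μ) m) (add_comm (Λ.d μ) n)
      (add_le_add_right hmn _) (add_le_add_left hmn _))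

lemma qk_mk_eq_mk {f₁ f₂ : CkG k G} (hw : ∃ w : NK k, ∀ p, w ≤ p → f₁ p = f₂ p) :
    (QuotientGroup.mk f₁ : QkG k G) = QuotientGroup.mk f₂ := by
  obtain ⟨w, h⟩ := hw
  rw [QuotientGroup.eq]
  exact ⟨w, fun p hp => by simp [Pi.mul_apply, Pi.inv_apply, h p hp]⟩

lemma qk_eq_exists {f₁ f₂ : CkG k G}
    (h : (QuotientGroup.mk f₁ : QkG k G) = QuotientGroup.mk f₂) :
    ∃ w : NK k, ∀ p, w ≤ p → f₁ p = f₂ p := by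
  rw [QuotientGroup.eq] at h
  obtain ⟨w, hw⟩ := h
  refine ⟨w, fun p hp => ?_⟩
  have h2 := hw p hp
  simp only [Pi.mul_apply, Pi.inv_apply] at h2
  exact inv_mul_eq_one.mp h2

lemma transFun_eval {z : NK k} (f : CkG k G) {p : NK k} (hzp : z ≤ p) :
    transFun (toZ z) f p = f (p - z) := by
  unfold transFun
  rw [if_pos]
  · congr 1; funext i
    have h := Pi.le_def.mp hzp i
    simp only [toZ, Pi.sub_apply]
    omega
  · intro i
    have h := Pi.le_def.mp hzp i
    simp only [toZ]
    exact_mod_cast h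

lemma s_act_eq (S : SelfSimilar k G Λ) (g : G) (α : Λ.Mor) :
    Λ.s (S.act g α) = S.actV (S.res g α) (Λ.s α) := by
  have h : Λ.s α = Λ.r (Λ.ofObj (Λ.s α)) := (Λ.r_ofObj _).symm
  have hc := S.act_comp g α (Λ.ofObj (Λ.s α)) h
  rw [Λ.comp_ofObj α h] at hc
  show _ = Λ.s (S.act (S.res g α) (Λ.ofObj (Λ.s α)))
  conv_lhs => rw [hc]
  rw [Λ.s_comp]

end Helpers
section Core

variable {k : ℕ} {G : Type} [Group G] {Λ : KGraph k}

lemma mid_core (S : SelfSimilar k G Λ) (μ : Λ.Mor) (g : G) (x : InfPath Λ)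
    (p : NK k) :
    (QuotientGroup.mk (transFun (toZ (Λ.d μ + p))
        (S.resInf (S.res g (x.seg 0 p (le0 p))) (x.shift p))) : QkG k G)
      = QuotientGroup.mk (transFun (toZ (Λ.d μ)) (S.resInf g x)) := by
  apply qk_mk_eq_mk
  refine ⟨Λ.d μ + p, fun p' hp' => ?_⟩
  have h1 : Λ.d μ ≤ p' := le_trans (nk_le_add _ _) hp'
  rw [transFun_eval _ hp', transFun_eval _ h1]
  show S.res (S.res g (x.seg 0 p (le0 p)))
      ((x.shift p).seg 0 (p' - (Λ.d μ + p)) (le0 _))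
    = S.res g (x.seg 0 (p' - Λ.d μ) (le0 _))
  have hple : p ≤ p' - Λ.d μ := Pi.le_def.mpr fun i => by
    have := Pi.le_def.mp hp' i
    simp only [Pi.add_apply, Pi.sub_apply] at *
    omega
  have e1 : x.seg (0 + p) ((p' - (Λ.d μ + p)) + p)
        (add_le_add_left (le0 _) p)
      = x.seg p (p' - Λ.d μ) hple :=
    seg_congr x (zero_add p)
      (by funext i
          have := Pi.le_def.mp hp' i
          simp only [Pi.add_apply, Pi.sub_apply] at *
          omega) _ _
  exact (congrArg _ e1).trans (res_seg_split S g x hple).symm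

end Core
section MemB

variable {k : ℕ} {G : Type} [Group G] {Λ : KGraph k}

lemma memB (S : SelfSimilar k G Λ) {μ ν : Λ.Mor} {g : G} {t : Triple k G Λ}
    {x y z : InfPath Λ} (hz : IsConcat Λ ν x z) (hy : IsConcat Λ μ (S.actInf g x) y)
    (ht : t = (y, ((QuotientGroup.mk (transFun (toZ (Λ.d μ)) (S.resInf g x)) : QkG k G),
      toZ (Λ.d μ) - toZ (Λ.d ν)), z))
    (p : NK k) (h₁ : Λ.s ν = Λ.r (x.seg 0 p (le0 p)))
    (hg : Λ.s μ = Λ.r (S.act g (x.seg 0 p (le0 p)))) :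
    t ∈ Zset S (Λ.comp μ (S.act g (x.seg 0 p (le0 p))) hg)
        (S.res g (x.seg 0 p (le0 p))) (Λ.comp ν (x.seg 0 p (le0 p)) h₁) := by
  have hdc : Λ.d (Λ.comp μ (S.act g (x.seg 0 p (le0 p))) hg) = Λ.d μ + p := by
    rw [Λ.d_comp, S.act_d, d_seg0]
  have hdν : Λ.d (Λ.comp ν (x.seg 0 p (le0 p)) h₁) = Λ.d ν + p := by
    rw [Λ.d_comp, d_seg0]
  refine ⟨x.shift p, y, z, concat_shift hz p h₁, ?_, ?_⟩
  · have hc := concat_shift hy p (src_r_seg0 hy.1 p)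
    have e1 : (S.actInf g x).seg 0 p (le0 p) = S.act g (x.seg 0 p (le0 p)) := by
      show S.act (S.res g (x.seg 0 0 (le0 0))) (x.seg 0 p (le0 p)) = _
      rw [show x.seg 0 0 (le0 0) = Λ.ofObj (Λ.s ν) from hz.1, S.res_ofObj]
    have e3 : Λ.comp μ ((S.actInf g x).seg 0 p (le0 p)) (src_r_seg0 hy.1 p)
        = Λ.comp μ (S.act g (x.seg 0 p (le0 p))) hg := comp_congr₂ Λ rfl e1 _ _
    rw [e3, actInf_shift S g x p] at hc
    exact hc
  · rw [ht]
    simp only [Prod.mk.injEq]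
    refine ⟨trivial, ⟨?_, ?_⟩, trivial⟩
    · rw [hdc]
      exact (mid_core S μ g x p).symm
    · rw [hdc, hdν]
      funext i
      simp only [Pi.sub_apply, toZ, Pi.add_apply]
      push_cast
      ring

end MemB
section MemA

variable {k : ℕ} {G : Type} [Group G] {Λ : KGraph k}

lemma memA (S : SelfSimilar k G Λ) {μ ν α : Λ.Mor} {g : G}
    (h₁ : Λ.s ν = Λ.r α) (hg : Λ.s μ = Λ.r (S.act g α)) :
    Zset S (Λ.comp μ (S.act g α) hg) (S.res g α) (Λ.comp ν α h₁) ⊆ Zset S μ g ν := by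
  rintro t ⟨xh, y, z, hz, hy, ht⟩
  have hdν : Λ.d (Λ.comp ν α h₁) = Λ.d ν + Λ.d α := Λ.d_comp _ _ _
  have hdμc : Λ.d (Λ.comp μ (S.act g α) hg) = Λ.d μ + Λ.d α := by
    rw [Λ.d_comp, S.act_d]
  have hzq : z.seg 0 (Λ.d ν + Λ.d α) (le0 _) = Λ.comp ν α h₁ :=
    (seg_congr z rfl hdν (le0 _) (le0 _)).symm.trans hz.2.1
  obtain ⟨hν₀, hα₀⟩ := seg_split (nk_le_add _ _) rfl hzq
  have hyq : y.seg 0 (Λ.d μ + Λ.d α) (le0 _) = Λ.comp μ (S.act g α) hg :=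
    (seg_congr y rfl hdμc (le0 _) (le0 _)).symm.trans hy.2.1
  obtain ⟨hμ₀, hgα₀⟩ := seg_split (nk_le_add _ _) rfl hyq
  have hx0pre : xh = z.shift (Λ.d ν + Λ.d α) := by
    rw [concat_unique_x hz, hdν]
  have hx0 : (z.shift (Λ.d ν)).seg 0 0 le_rfl = Λ.ofObj (Λ.s ν) := by
    show z.seg (0 + Λ.d ν) (0 + Λ.d ν) _ = _
    rw [seg_congr z (zero_add _) (zero_add _) (add_le_add_left le_rfl _) le_rfl,
      seg_diag z (le0 (Λ.d ν)) le_rfl, hν₀]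
  have pf2 : ∀ m : NK k, Λ.s α = Λ.r (xh.seg 0 m (le0 m)) := by
    intro m
    rw [← Λ.s_comp ν α h₁]
    exact src_r_seg0 hz.1 m
  have hxh0 : xh.seg 0 0 le_rfl = Λ.ofObj (Λ.s α) := by
    rw [hz.1]; congr 1; exact Λ.s_comp ν α h₁
  have keyA : ∀ n : NK k, Λ.d α ≤ n →
      S.act g (z.seg (Λ.d ν) (Λ.d ν + n) (nk_le_add _ _))
        = y.seg (Λ.d μ) (Λ.d μ + n) (nk_le_add _ _) := by
    intro n hn
    have pfz : Λ.d ν + Λ.d α ≤ Λ.d ν + n := add_le_add_right hn _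
    have hseg1 : z.seg (Λ.d ν) (Λ.d ν + n) (nk_le_add _ _)
        = Λ.comp (z.seg (Λ.d ν) (Λ.d ν + Λ.d α) (nk_le_add _ _))
            (z.seg (Λ.d ν + Λ.d α) (Λ.d ν + n) pfz)
            (z.src_seg _ _ _ _ _) :=
      (z.comp_seg (Λ.d ν) (Λ.d ν + Λ.d α) (Λ.d ν + n) (nk_le_add _ _) pfz).symm
    have hxh2 : z.seg (Λ.d ν + Λ.d α) (Λ.d ν + n) pfz
        = xh.seg 0 (n - Λ.d α) (le0 _) := by
      have h3 := hz.2.2 0 (n - Λ.d α) (le0 _)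
      refine (seg_congr z ?_ ?_ _ _).trans h3
      · funext i; have h4 := congrFun hdν i
        simp only [Pi.add_apply, Pi.zero_apply] at h4 ⊢; omega
      · funext i; have h4 := congrFun hdν i; have h5 := Pi.le_def.mp hn i
        simp only [Pi.add_apply, Pi.sub_apply] at h4 ⊢; omega
    have hmain : z.seg (Λ.d ν) (Λ.d ν + n) (nk_le_add _ _)
        = Λ.comp α (xh.seg 0 (n - Λ.d α) (le0 _)) (pf2 _) :=
      hseg1.trans (comp_congr₂ Λ hα₀ hxh2 _ _)
    have hact : S.act g (z.seg (Λ.d ν) (Λ.d ν + n) (nk_le_add _ _))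
        = Λ.comp (S.act g α) (S.act (S.res g α) (xh.seg 0 (n - Λ.d α) (le0 _)))
            (S.compat g α _ (pf2 _)) := by
      rw [hmain]; exact S.act_comp g α _ (pf2 _)
    have hactInf : (S.actInf (S.res g α) xh).seg 0 (n - Λ.d α) (le0 _)
        = S.act (S.res g α) (xh.seg 0 (n - Λ.d α) (le0 _)) := by
      show S.act (S.res (S.res g α) (xh.seg 0 0 (le0 0))) _ = _
      rw [show xh.seg 0 0 (le0 0) = Λ.ofObj (Λ.s α) from hxh0, S.res_ofObj]
    have pf4 : Λ.d μ + Λ.d α ≤ Λ.d μ + n := add_le_add_right hn _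
    have hyfact : y.seg 0 (Λ.d μ + n) (le0 _)
        = Λ.comp (Λ.comp μ (S.act g α) hg)
            (S.act (S.res g α) (xh.seg 0 (n - Λ.d α) (le0 _)))
            ((Λ.s_comp μ (S.act g α) hg).trans (S.compat g α _ (pf2 _))) := by
      have hcs := y.comp_seg 0 (Λ.d μ + Λ.d α) (Λ.d μ + n) (le0 _) pf4
      have e5 : y.seg (Λ.d μ + Λ.d α) (Λ.d μ + n) pf4
          = S.act (S.res g α) (xh.seg 0 (n - Λ.d α) (le0 _)) := by
        have h3 := hy.2.2 0 (n - Λ.d α) (le0 _)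
        refine ((seg_congr y ?_ ?_ _ _).trans h3).trans hactInf
        · funext i; have h4 := congrFun hdμc i
          simp only [Pi.add_apply, Pi.zero_apply] at h4 ⊢; omega
        · funext i; have h4 := congrFun hdμc i; have h5 := Pi.le_def.mp hn i
          simp only [Pi.add_apply, Pi.sub_apply] at h4 ⊢; omega
      exact hcs.symm.trans (comp_congr₂ Λ hyq e5 _ _)
    have hact2 : y.seg 0 (Λ.d μ + n) (le0 _)
        = Λ.comp μ (S.act g (z.seg (Λ.d ν) (Λ.d ν + n) (nk_le_add _ _)))
            (by rw [hact, Λ.r_comp]; exact hg) := by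
      refine hyfact.trans ?_
      refine (Λ.comp_assoc μ (S.act g α) _ hg (S.compat g α _ (pf2 _))).trans ?_
      exact comp_congr₂ Λ rfl hact.symm _ _
    have hyfact3 : y.seg 0 (Λ.d μ + n) (le0 _)
        = Λ.comp μ (y.seg (Λ.d μ) (Λ.d μ + n) (nk_le_add _ _))
            (by rw [← y.src_seg 0 (Λ.d μ) (Λ.d μ + n) (le0 _) (nk_le_add _ _), hμ₀]) := by
      have hcs := y.comp_seg 0 (Λ.d μ) (Λ.d μ + n) (le0 _) (nk_le_add _ _)
      exact hcs.symm.trans (comp_congr₂ Λ hμ₀ rfl _ _)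
    exact (Λ.factor_unique μ _ μ _ _ _ rfl (hact2.symm.trans hyfact3)).2
  have key : ∀ n : NK k,
      S.act g (z.seg (Λ.d ν) (Λ.d ν + n) (nk_le_add _ _))
        = y.seg (Λ.d μ) (Λ.d μ + n) (nk_le_add _ _) := by
    intro n
    have hn' : n ≤ n ⊔ Λ.d α := le_sup_left
    have hA := keyA (n ⊔ Λ.d α) le_sup_right
    have pfz : Λ.d ν + n ≤ Λ.d ν + (n ⊔ Λ.d α) := add_le_add_right hn' _
    have pfy : Λ.d μ + n ≤ Λ.d μ + (n ⊔ Λ.d α) := add_le_add_right hn' _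
    have hzdec := (z.comp_seg (Λ.d ν) (Λ.d ν + n) (Λ.d ν + (n ⊔ Λ.d α))
      (nk_le_add _ _) pfz).symm
    have hydec := (y.comp_seg (Λ.d μ) (Λ.d μ + n) (Λ.d μ + (n ⊔ Λ.d α))
      (nk_le_add _ _) pfy).symm
    have hAct : S.act g (z.seg (Λ.d ν) (Λ.d ν + (n ⊔ Λ.d α)) (nk_le_add _ _))
        = Λ.comp (S.act g (z.seg (Λ.d ν) (Λ.d ν + n) (nk_le_add _ _)))
            (S.act (S.res g (z.seg (Λ.d ν) (Λ.d ν + n) (nk_le_add _ _)))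
              (z.seg (Λ.d ν + n) (Λ.d ν + (n ⊔ Λ.d α)) pfz))
            (S.compat g _ _ (z.src_seg (Λ.d ν) (Λ.d ν + n) (Λ.d ν + (n ⊔ Λ.d α))
              (nk_le_add _ _) pfz)) := by
      rw [hzdec]; exact S.act_comp g _ _ _
    have hcomb := (hAct.symm.trans hA).trans hydec
    refine (Λ.factor_unique _ _ _ _ _ _ ?_ hcomb).1
    rw [S.act_d, z.d_seg, y.d_seg]
    funext i; simp only [Pi.add_apply]; omega
  have gxkey : S.actInf g (z.shift (Λ.d ν)) = y.shift (Λ.d μ) := by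
    apply InfPath.ext0
    intro n
    show S.act (S.res g ((z.shift (Λ.d ν)).seg 0 0 (le0 0)))
        ((z.shift (Λ.d ν)).seg 0 n (le0 n)) = (y.shift (Λ.d μ)).seg 0 n (le0 n)
    rw [show (z.shift (Λ.d ν)).seg 0 0 (le0 0) = Λ.ofObj (Λ.s ν) from hx0,
      S.res_ofObj]
    have e : (z.shift (Λ.d ν)).seg 0 n (le0 n)
        = z.seg (Λ.d ν) (Λ.d ν + n) (nk_le_add _ _) :=
      seg_congr z (zero_add _) (add_comm _ _) _ _
    have e' : (y.shift (Λ.d μ)).seg 0 n (le0 n)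
        = y.seg (Λ.d μ) (Λ.d μ + n) (nk_le_add _ _) :=
      seg_congr y (zero_add _) (add_comm _ _) _ _
    rw [e, e', key n]
  have hyx : IsConcat Λ μ (S.actInf g (z.shift (Λ.d ν))) y := by
    rw [gxkey]; exact isConcat_shift_self hμ₀
  refine ⟨z.shift (Λ.d ν), y, z, isConcat_shift_self hν₀, hyx, ?_⟩
  rw [ht]
  have hα₂ : (z.shift (Λ.d ν)).seg 0 (Λ.d α) (le0 _) = α :=
    (seg_congr z (zero_add _) (add_comm _ _) _ (nk_le_add _ _)).trans hα₀
  have hshift : (z.shift (Λ.d ν)).shift (Λ.d α) = xh := by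
    rw [hx0pre]
    apply InfPath.ext'
    funext m n h
    exact seg_congr z (by funext i; simp only [Pi.add_apply]; omega)
      (by funext i; simp only [Pi.add_apply]; omega) _ _
  have hmid := mid_core S μ g (z.shift (Λ.d ν)) (Λ.d α)
  rw [hα₂, hshift] at hmid
  simp only [Prod.mk.injEq]
  refine ⟨trivial, ⟨?_, ?_⟩, trivial⟩
  · rw [hdμc]; exact hmid
  · rw [hdμc, hdν]; funext i
    simp only [Pi.sub_apply, toZ, Pi.add_apply]; push_cast; ring

end MemA
/-- for a pseudo free action, the intersection of two basic sets of the
self-similar path groupoid is the displayed union of basic sets; in particular, the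
family `B_{G,Λ}` is a base for a topology on `G_{G,Λ}`. -/
theorem stmt12 {k : ℕ} (hk : 0 < k) (G : Type) [Group G] [Countable G]
    (Λ : KGraph k) (S : SelfSimilar k G Λ) (hpf : S.PseudoFree) :
    (∀ (g g' : G) (μ ν μ' ν' : Λ.Mor),
      Λ.s μ = S.actV g (Λ.s ν) → Λ.s μ' = S.actV g' (Λ.s ν') →
      Zset S μ g ν ∩ Zset S μ' g' ν' =
        {t | ∃ (α α' : Λ.Mor) (h₁ : Λ.s ν = Λ.r α) (hg : Λ.s μ = Λ.r (S.act g α)),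
          (α, α') ∈ Lmin Λ ν ν' ∧ (S.act g α, S.act g' α') ∈ Lmin Λ μ μ' ∧
          S.res g α = S.res g' α' ∧
          t ∈ Zset S (Λ.comp μ (S.act g α) hg) (S.res g α) (Λ.comp ν α h₁)}) ∧
    (∀ Z₁ ∈ BGL S, ∀ Z₂ ∈ BGL S, ∀ t ∈ Z₁ ∩ Z₂, ∃ Z₃ ∈ BGL S, t ∈ Z₃ ∧ Z₃ ⊆ Z₁ ∩ Z₂) := by
  have part1 : ∀ (g g' : G) (μ ν μ' ν' : Λ.Mor),
      Λ.s μ = S.actV g (Λ.s ν) → Λ.s μ' = S.actV g' (Λ.s ν') →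
      Zset S μ g ν ∩ Zset S μ' g' ν' =
        {t | ∃ (α α' : Λ.Mor) (h₁ : Λ.s ν = Λ.r α) (hg : Λ.s μ = Λ.r (S.act g α)),
          (α, α') ∈ Lmin Λ ν ν' ∧ (S.act g α, S.act g' α') ∈ Lmin Λ μ μ' ∧
          S.res g α = S.res g' α' ∧
          t ∈ Zset S (Λ.comp μ (S.act g α) hg) (S.res g α) (Λ.comp ν α h₁)} := by
    intro g g' μ ν μ' ν' hsv hsv'
    ext t
    constructor
    · rintro ⟨⟨x, y, z, hz, hy, ht⟩, ⟨x', y', z', hz', hy', ht'⟩⟩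
      have heq := ht.symm.trans ht'
      simp only [Prod.mk.injEq] at heq
      obtain ⟨hyy', ⟨hQ, hZK⟩, hzz'⟩ := heq
      subst hyy'; subst hzz'
      have hZKi : ∀ i, (Λ.d μ i : ℤ) - Λ.d ν i = Λ.d μ' i - Λ.d ν' i := by
        intro i
        have h2 := congrFun hZK i
        simpa only [Pi.sub_apply, toZ] using h2
      set n := Λ.d ν ⊔ Λ.d ν' with hndef
      have hνn : Λ.d ν ≤ n := le_sup_left
      have hν'n : Λ.d ν' ≤ n := le_sup_right
      have h₁x : Λ.s ν = Λ.r (x.seg 0 (n - Λ.d ν) (le0 _)) := src_r_seg0 hz.1 _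
      have h₁x' : Λ.s ν' = Λ.r (x'.seg 0 (n - Λ.d ν') (le0 _)) := src_r_seg0 hz'.1 _
      have e1 : (S.actInf g x).seg 0 (n - Λ.d ν) (le0 _)
          = S.act g (x.seg 0 (n - Λ.d ν) (le0 _)) := by
        show S.act (S.res g (x.seg 0 0 (le0 0))) _ = _
        rw [show x.seg 0 0 (le0 0) = Λ.ofObj (Λ.s ν) from hz.1, S.res_ofObj]
      have e1' : (S.actInf g' x').seg 0 (n - Λ.d ν') (le0 _)
          = S.act g' (x'.seg 0 (n - Λ.d ν') (le0 _)) := by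
        show S.act (S.res g' (x'.seg 0 0 (le0 0))) _ = _
        rw [show x'.seg 0 0 (le0 0) = Λ.ofObj (Λ.s ν') from hz'.1, S.res_ofObj]
      have hg2 : Λ.s μ = Λ.r (S.act g (x.seg 0 (n - Λ.d ν) (le0 _))) := by
        rw [← e1]; exact src_r_seg0 hy.1 _
      have hg2' : Λ.s μ' = Λ.r (S.act g' (x'.seg 0 (n - Λ.d ν') (le0 _))) := by
        rw [← e1']; exact src_r_seg0 hy'.1 _
      have hαz : x.seg 0 (n - Λ.d ν) (le0 _) = z.seg (Λ.d ν) n hνn := by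
        have h3 := hz.2.2 0 (n - Λ.d ν) (le0 _)
        refine h3.symm.trans (seg_congr z (add_zero _) ?_ _ _)
        funext i; have h4 := Pi.le_def.mp hνn i
        simp only [Pi.add_apply, Pi.sub_apply]; omega
      have hα'z : x'.seg 0 (n - Λ.d ν') (le0 _) = z.seg (Λ.d ν') n hν'n := by
        have h3 := hz'.2.2 0 (n - Λ.d ν') (le0 _)
        refine h3.symm.trans (seg_congr z (add_zero _) ?_ _ _)
        funext i; have h4 := Pi.le_def.mp hν'n i
        simp only [Pi.add_apply, Pi.sub_apply]; omega
      have hrν : Λ.s ν = Λ.r (z.seg (Λ.d ν) n hνn) := by rw [← hαz]; exact h₁x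
      have hrν' : Λ.s ν' = Λ.r (z.seg (Λ.d ν') n hν'n) := by rw [← hα'z]; exact h₁x'
      have hcν : Λ.comp ν (x.seg 0 (n - Λ.d ν) (le0 _)) h₁x = z.seg 0 n (le0 n) :=
        (comp_congr₂ Λ rfl hαz h₁x hrν).trans (comp_prefix hz.2.1 hνn hrν)
      have hcν' : Λ.comp ν' (x'.seg 0 (n - Λ.d ν') (le0 _)) h₁x' = z.seg 0 n (le0 n) :=
        (comp_congr₂ Λ rfl hα'z h₁x' hrν').trans (comp_prefix hz'.2.1 hν'n hrν')
      have hLν : (x.seg 0 (n - Λ.d ν) (le0 _), x'.seg 0 (n - Λ.d ν') (le0 _))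
          ∈ Lmin Λ ν ν' := by
        refine ⟨h₁x, h₁x', hcν.trans hcν'.symm, ?_⟩
        rw [Λ.d_comp, d_seg0]
        funext i
        have h4 := Pi.le_def.mp hνn i
        have h5 := congrFun hndef i
        simp only [Pi.sup_apply] at h5
        simp only [Pi.add_apply, Pi.sub_apply, Pi.sup_apply]
        omega
      have hmm' : Λ.d μ' + (n - Λ.d ν') = Λ.d μ + (n - Λ.d ν) := by
        funext i
        have h4 := hZKi i
        have h5 := Pi.le_def.mp hνn i
        have h6 := Pi.le_def.mp hν'n i
        simp only [Pi.add_apply, Pi.sub_apply]; omega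
      have hαy : S.act g (x.seg 0 (n - Λ.d ν) (le0 _))
          = y.seg (Λ.d μ) (Λ.d μ + (n - Λ.d ν)) (nk_le_add _ _) := by
        have h3 := hy.2.2 0 (n - Λ.d ν) (le0 _)
        exact (e1.symm.trans h3.symm).trans (seg_congr y (add_zero _) rfl _ _)
      have hα'y : S.act g' (x'.seg 0 (n - Λ.d ν') (le0 _))
          = y.seg (Λ.d μ') (Λ.d μ' + (n - Λ.d ν')) (nk_le_add _ _) := by
        have h3 := hy'.2.2 0 (n - Λ.d ν') (le0 _)
        exact (e1'.symm.trans h3.symm).trans (seg_congr y (add_zero _) rfl _ _)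
      have hry : Λ.s μ = Λ.r (y.seg (Λ.d μ) (Λ.d μ + (n - Λ.d ν)) (nk_le_add _ _)) := by
        rw [← hαy]; exact hg2
      have hry' : Λ.s μ' = Λ.r (y.seg (Λ.d μ') (Λ.d μ' + (n - Λ.d ν')) (nk_le_add _ _)) := by
        rw [← hα'y]; exact hg2'
      have hcμ : Λ.comp μ (S.act g (x.seg 0 (n - Λ.d ν) (le0 _))) hg2
          = y.seg 0 (Λ.d μ + (n - Λ.d ν)) (le0 _) :=
        (comp_congr₂ Λ rfl hαy hg2 hry).trans (comp_prefix hy.2.1 (nk_le_add _ _) hry)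
      have hcμ' : Λ.comp μ' (S.act g' (x'.seg 0 (n - Λ.d ν') (le0 _))) hg2'
          = y.seg 0 (Λ.d μ' + (n - Λ.d ν')) (le0 _) :=
        (comp_congr₂ Λ rfl hα'y hg2' hry').trans (comp_prefix hy'.2.1 (nk_le_add _ _) hry')
      have hLμ : (S.act g (x.seg 0 (n - Λ.d ν) (le0 _)),
          S.act g' (x'.seg 0 (n - Λ.d ν') (le0 _))) ∈ Lmin Λ μ μ' := by
        refine ⟨hg2, hg2', hcμ.trans ((hcμ'.trans (seg_congr y rfl hmm' _ _)).symm), ?_⟩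
        rw [Λ.d_comp, S.act_d, d_seg0]
        funext i
        have h4 := hZKi i
        have h5 := Pi.le_def.mp hνn i
        have h6 := Pi.le_def.mp hν'n i
        have h7 := congrFun hndef i
        simp only [Pi.sup_apply] at h7
        simp only [Pi.add_apply, Pi.sub_apply, Pi.sup_apply]
        omega
      -- the restriction identity, via pseudo freeness
      obtain ⟨w, hw⟩ := qk_eq_exists hQ
      set P := w ⊔ (Λ.d μ + (n - Λ.d ν)) ⊔ (Λ.d μ' + (n - Λ.d ν')) with hPdef
      have hwP : w ≤ P := le_sup_of_le_left le_sup_left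
      have hμP : Λ.d μ + (n - Λ.d ν) ≤ P := le_sup_of_le_left le_sup_right
      have hμ'P : Λ.d μ' + (n - Λ.d ν') ≤ P := le_sup_right
      have hμleP : Λ.d μ ≤ P := le_trans (nk_le_add _ _) hμP
      have hμ'leP : Λ.d μ' ≤ P := le_trans (nk_le_add _ _) hμ'P
      have hstep := hw P hwP
      rw [transFun_eval _ hμleP, transFun_eval _ hμ'leP] at hstep
      have hpαq : n - Λ.d ν ≤ P - Λ.d μ := Pi.le_def.mpr fun i => by
        have h4 := Pi.le_def.mp hμP i
        simp only [Pi.add_apply, Pi.sub_apply] at h4 ⊢; omega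
      have hpαq' : n - Λ.d ν' ≤ P - Λ.d μ' := Pi.le_def.mpr fun i => by
        have h4 := Pi.le_def.mp hμ'P i
        simp only [Pi.add_apply, Pi.sub_apply] at h4 ⊢; omega
      have hr1 : S.resInf g x (P - Λ.d μ)
          = S.res (S.res g (x.seg 0 (n - Λ.d ν) (le0 _)))
              (x.seg (n - Λ.d ν) (P - Λ.d μ) hpαq) := res_seg_split S g x hpαq
      have hr1' : S.resInf g' x' (P - Λ.d μ')
          = S.res (S.res g' (x'.seg 0 (n - Λ.d ν') (le0 _)))
              (x'.seg (n - Λ.d ν') (P - Λ.d μ') hpαq') := res_seg_split S g' x' hpαq'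
      have hnleg : n ≤ Λ.d ν + (P - Λ.d μ) := Pi.le_def.mpr fun i => by
        have h4 := Pi.le_def.mp hμP i
        have h5 := Pi.le_def.mp hνn i
        simp only [Pi.add_apply, Pi.sub_apply] at h4 ⊢; omega
      have hnleg' : n ≤ Λ.d ν' + (P - Λ.d μ') := Pi.le_def.mpr fun i => by
        have h4 := Pi.le_def.mp hμ'P i
        have h5 := Pi.le_def.mp hν'n i
        simp only [Pi.add_apply, Pi.sub_apply] at h4 ⊢; omega
      have hβ : x.seg (n - Λ.d ν) (P - Λ.d μ) hpαq
          = z.seg n (Λ.d ν + (P - Λ.d μ)) hnleg := by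
        have h3 := hz.2.2 (n - Λ.d ν) (P - Λ.d μ) hpαq
        refine h3.symm.trans (seg_congr z ?_ rfl _ _)
        funext i; have h4 := Pi.le_def.mp hνn i
        simp only [Pi.add_apply, Pi.sub_apply]; omega
      have hβ' : x'.seg (n - Λ.d ν') (P - Λ.d μ') hpαq'
          = z.seg n (Λ.d ν' + (P - Λ.d μ')) hnleg' := by
        have h3 := hz'.2.2 (n - Λ.d ν') (P - Λ.d μ') hpαq'
        refine h3.symm.trans (seg_congr z ?_ rfl _ _)
        funext i; have h4 := Pi.le_def.mp hν'n i
        simp only [Pi.add_apply, Pi.sub_apply]; omega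
      have hββ' : x.seg (n - Λ.d ν) (P - Λ.d μ) hpαq
          = x'.seg (n - Λ.d ν') (P - Λ.d μ') hpαq' := by
        refine hβ.trans ((seg_congr z rfl ?_ _ _).trans hβ'.symm)
        funext i
        have h4 := hZKi i
        have h5 := Pi.le_def.mp hμleP i
        have h6 := Pi.le_def.mp hμ'leP i
        simp only [Pi.add_apply, Pi.sub_apply]; omega
      have heqP : Λ.d μ + (P - Λ.d μ) = P := by
        funext i; have h4 := Pi.le_def.mp hμleP i
        simp only [Pi.add_apply, Pi.sub_apply]; omega
      have heqP' : Λ.d μ' + (P - Λ.d μ') = P := by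
        funext i; have h4 := Pi.le_def.mp hμ'leP i
        simp only [Pi.add_apply, Pi.sub_apply]; omega
      have hact1 : S.act (S.res g (x.seg 0 (n - Λ.d ν) (le0 _)))
          (x.seg (n - Λ.d ν) (P - Λ.d μ) hpαq)
          = y.seg (Λ.d μ + (n - Λ.d ν)) P hμP := by
        have h3 := hy.2.2 (n - Λ.d ν) (P - Λ.d μ) hpαq
        exact h3.symm.trans (seg_congr y rfl heqP _ hμP)
      have hact1' : S.act (S.res g' (x'.seg 0 (n - Λ.d ν') (le0 _)))
          (x'.seg (n - Λ.d ν') (P - Λ.d μ') hpαq')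
          = y.seg (Λ.d μ + (n - Λ.d ν)) P hμP := by
        have h3 := hy'.2.2 (n - Λ.d ν') (P - Λ.d μ') hpαq'
        exact (h3.symm.trans (seg_congr y rfl heqP' _ hμ'P)).trans
          (seg_congr y hmm' rfl _ _)
      have haa : S.act (S.res g (x.seg 0 (n - Λ.d ν) (le0 _)))
          (x.seg (n - Λ.d ν) (P - Λ.d μ) hpαq)
          = S.act (S.res g' (x'.seg 0 (n - Λ.d ν') (le0 _)))
          (x.seg (n - Λ.d ν) (P - Λ.d μ) hpαq) := by
        have hcomb := hact1.trans hact1'.symm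
        rw [← hββ'] at hcomb
        exact hcomb
      have hrr : S.res (S.res g (x.seg 0 (n - Λ.d ν) (le0 _)))
          (x.seg (n - Λ.d ν) (P - Λ.d μ) hpαq)
          = S.res (S.res g' (x'.seg 0 (n - Λ.d ν') (le0 _)))
          (x.seg (n - Λ.d ν) (P - Λ.d μ) hpαq) := by
        have hcomb := hr1.symm.trans (hstep.trans hr1')
        rw [← hββ'] at hcomb
        exact hcomb
      have hc1 : S.act ((S.res g' (x'.seg 0 (n - Λ.d ν') (le0 _)))⁻¹
            * S.res g (x.seg 0 (n - Λ.d ν) (le0 _)))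
          (x.seg (n - Λ.d ν) (P - Λ.d μ) hpαq)
          = x.seg (n - Λ.d ν) (P - Λ.d μ) hpαq := by
        rw [S.act_mul, haa, ← S.act_mul, inv_mul_cancel, S.act_one]
      have hc2 : S.res ((S.res g' (x'.seg 0 (n - Λ.d ν') (le0 _)))⁻¹
            * S.res g (x.seg 0 (n - Λ.d ν) (le0 _)))
          (x.seg (n - Λ.d ν) (P - Λ.d μ) hpαq) = 1 := by
        rw [S.res_mul, haa, hrr, ← S.res_mul, inv_mul_cancel, S.res_one]
      have hresf : S.res g (x.seg 0 (n - Λ.d ν) (le0 _))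
          = S.res g' (x'.seg 0 (n - Λ.d ν') (le0 _)) :=
        (inv_mul_eq_one.mp (hpf _ _ hc1 hc2)).symm
      exact ⟨_, _, h₁x, hg2, hLν, hLμ, hresf, memB S hz hy ht _ h₁x hg2⟩
    · rintro ⟨α, α', h₁, hg, hLν, hLμ, hres, hmem⟩
      obtain ⟨hν₁, hν₂, hcν, hdν⟩ := hLν
      obtain ⟨hμ₁, hμ₂, hcμ, hdμ⟩ := hLμ
      refine ⟨memA S h₁ hg hmem, ?_⟩
      have e1 : Λ.comp μ (S.act g α) hg = Λ.comp μ' (S.act g' α') hμ₂ := hcμ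
      have e2 : Λ.comp ν α h₁ = Λ.comp ν' α' hν₂ := hcν
      have e3 : Zset S (Λ.comp μ (S.act g α) hg) (S.res g α) (Λ.comp ν α h₁)
          = Zset S (Λ.comp μ' (S.act g' α') hμ₂) (S.res g' α') (Λ.comp ν' α' hν₂) := by
        rw [e1, e2, hres]
      exact memA S hν₂ hμ₂ (e3 ▸ hmem)
  refine ⟨part1, ?_⟩
  rintro Z₁ ⟨μ, ν, g, hsv, rfl⟩ Z₂ ⟨μ', ν', g', hsv', rfl⟩ t ht
  rw [part1 g g' μ ν μ' ν' hsv hsv'] at ht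
  obtain ⟨α, α', h₁, hg, hLν, hLμ, hres, hmem⟩ := ht
  refine ⟨Zset S (Λ.comp μ (S.act g α) hg) (S.res g α) (Λ.comp ν α h₁),
    ⟨Λ.comp μ (S.act g α) hg, Λ.comp ν α h₁, S.res g α, ?_, rfl⟩, hmem, ?_⟩
  · rw [Λ.s_comp, Λ.s_comp]
    exact s_act_eq S g α
  · rw [part1 g g' μ ν μ' ν' hsv hsv']
    intro u hu
    exact ⟨α, α', h₁, hg, hLν, hLμ, hres, hu⟩

end SSKG
end
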